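/- arXiv:2508.05901 — 3 statements merged into one kernel-verified Lean document; each statement's English description precedes it below -/
import Mathlib

section
/- Let (S, 𝒮) be a measurable space, n ≥ 3, and let X₁,…,Xₙ be i.i.d. S-valued random variables with law μ. Let A : Sⁿ → 2^S and A' : Sⁿ⁻¹ → 2^S be symmetric measurable set-valued maps, and define δ' := E[μ(A(X₁,…,Xₙ) Δ A'(X₁,…,Xₙ₋₁))]. For 1 ≤ i ≤ n set Kᵢ := 1{Xᵢ ∈ A'(X₁,…,Xᵢ₋₁,Xᵢ₊₁,…,Xₙ)}, Lᵢ := E(Kᵢ | X₁,…,Xᵢ₋₁,Xᵢ₊₁,…,Xₙ) and I' := Σᵢ₌₁ⁿ Lᵢ. Then E|I'/n − μ(A(X₁,…,Xₙ))| ≤ 2δ'. -/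
open MeasureTheory ProbabilityTheory

noncomputable section

/-- The map `Fin (n-1) → Fin n` that skips the index `i`. -/
def skipIdx {n : ℕ} (i : Fin n) (j : Fin (n - 1)) : Fin n :=
  if (j : ℕ) < (i : ℕ) then Fin.castLE (Nat.sub_le n 1) j
  else ⟨(j : ℕ) + 1, by have := j.isLt; omega⟩

lemma skipIdx_eq_succAbove {m : ℕ} (i : Fin (m + 1)) (j : Fin m) :
    skipIdx i j = i.succAbove j := by
  rw [skipIdx, Fin.succAbove]
  rcases lt_or_ge (j : ℕ) (i : ℕ) with h | h
  · rw [if_pos h, if_pos (by simpa [Fin.lt_def] using h)]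
    rfl
  · rw [if_neg (not_lt.2 h), if_neg (by simpa [Fin.lt_def] using h)]
    rfl

lemma skipIdx_ne {m : ℕ} (i : Fin (m + 1)) (j : Fin m) : skipIdx i j ≠ i := by
  rw [skipIdx_eq_succAbove]; exact Fin.succAbove_ne i j

lemma iid_map_eq_pi {S Ω : Type*} [MeasurableSpace S] [MeasurableSpace Ω]
    (P : Measure Ω) [IsProbabilityMeasure P] (μ : Measure S) [IsProbabilityMeasure μ]
    {n : ℕ} (X : Fin n → Ω → S) (hmeas : ∀ i, Measurable (X i))
    (hindep : iIndepFun X P)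
    (hlaw : ∀ i, Measure.map (X i) P = μ) :
    Measure.map (fun ω i => X i ω) P = Measure.pi (fun _ => μ) := by
  refine (Measure.pi_eq (μ := fun _ : Fin n => μ) fun s hs => ?_).symm
  rw [Measure.map_apply (measurable_pi_lambda _ hmeas) (MeasurableSet.univ_pi hs)]
  have hpre : (fun ω i => X i ω) ⁻¹' Set.pi Set.univ s = ⋂ i ∈ Finset.univ, X i ⁻¹' s i := by
    ext ω; simp [Set.mem_pi]
  rw [hpre, hindep.measure_inter_preimage_eq_mul Finset.univ (fun i _ => hs i)]
  refine Finset.prod_congr rfl fun i _ => ?_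
  rw [← hlaw i, Measure.map_apply (hmeas i) (hs i)]

lemma pi_map_comp_perm {S : Type*} [MeasurableSpace S]
    (μ : Measure S) [IsProbabilityMeasure μ] {n : ℕ} (σ : Equiv.Perm (Fin n)) :
    Measure.map (fun x : Fin n → S => x ∘ σ) (Measure.pi fun _ => μ)
      = Measure.pi (fun _ => μ) := by
  refine (Measure.pi_eq (μ := fun _ : Fin n => μ) fun s hs => ?_).symm
  have hmeas : Measurable (fun x : Fin n → S => x ∘ σ) :=
    measurable_pi_lambda _ fun j => measurable_pi_apply _
  rw [Measure.map_apply hmeas (MeasurableSet.univ_pi hs)]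
  have hpre : (fun x : Fin n → S => x ∘ σ) ⁻¹' Set.pi Set.univ s
      = Set.pi Set.univ (fun k => s (σ.symm k)) := by
    ext x
    simp only [Set.mem_preimage, Set.mem_pi, Set.mem_univ, forall_true_left, Function.comp]
    exact ⟨fun h k => by simpa using h (σ.symm k), fun h i => by simpa using h (σ i)⟩
  rw [hpre, Measure.pi_pi]
  exact Equiv.prod_comp σ.symm (fun i => μ (s i))

lemma abs_toReal_measure_sub_le {S : Type*} [MeasurableSpace S]
    (μ : Measure S) [IsFiniteMeasure μ] (A B : Set S) :
    |(μ B).toReal - (μ A).toReal| ≤ (μ (symmDiff A B)).toReal := by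
  have hAB : A ⊆ B ∪ symmDiff A B := by
    intro x hx
    by_cases hxB : x ∈ B
    · exact Or.inl hxB
    · exact Or.inr (Or.inl ⟨hx, hxB⟩)
  have hBA : B ⊆ A ∪ symmDiff A B := by
    intro x hx
    by_cases hxA : x ∈ A
    · exact Or.inl hxA
    · exact Or.inr (Or.inr ⟨hx, hxA⟩)
  have h1 : μ A ≤ μ B + μ (symmDiff A B) := (measure_mono hAB).trans (measure_union_le _ _)
  have h2 : μ B ≤ μ A + μ (symmDiff A B) := (measure_mono hBA).trans (measure_union_le _ _)
  rw [abs_sub_le_iff]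
  constructor
  · rw [sub_le_iff_le_add, ← ENNReal.toReal_add (measure_ne_top _ _) (measure_ne_top _ _)]
    exact ENNReal.toReal_mono (by finiteness) (h2.trans_eq (add_comm _ _))
  · rw [sub_le_iff_le_add, ← ENNReal.toReal_add (measure_ne_top _ _) (measure_ne_top _ _)]
    exact ENNReal.toReal_mono (by finiteness) (h1.trans_eq (add_comm _ _))


lemma condexp_freeze {α β Ω : Type*} [MeasurableSpace α] [MeasurableSpace β]
    [mΩ : MeasurableSpace Ω]
    (P : Measure Ω) [IsProbabilityMeasure P]
    (μ : Measure α) [IsProbabilityMeasure μ]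
    (f : Ω → α) (g : Ω → β) (hf : Measurable f) (hg : Measurable g)
    (hfg : IndepFun g f P) (hlawf : Measure.map f P = μ)
    {C : Set (β × α)} (hC : MeasurableSet C) :
    (fun ω => (μ {x | (g ω, x) ∈ C}).toReal)
      =ᵐ[P] condExp (MeasurableSpace.comap g inferInstance) P
        (fun ω => Set.indicator {x | (g ω, x) ∈ C} (fun _ => (1 : ℝ)) (f ω)) := by
  have hm : MeasurableSpace.comap g inferInstance ≤ mΩ := hg.comap_le
  haveI : SigmaFinite (P.trim hm) := inferInstance
  have hμy : Measurable fun y : β => μ {x | (y, x) ∈ C} :=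
    measurable_measure_prodMk_left hC
  have hhm : Measurable fun y : β => (μ {x | (y, x) ∈ C}).toReal := hμy.ennreal_toReal
  have hZmeas : Measurable (fun ω => (g ω, f ω) : Ω → β × α) := hg.prodMk hf
  have hKeq : (fun ω => Set.indicator {x | (g ω, x) ∈ C} (fun _ => (1 : ℝ)) (f ω))
      = Set.indicator ((fun ω => (g ω, f ω)) ⁻¹' C) (fun _ => (1 : ℝ)) := by
    funext ω
    by_cases hω : (g ω, f ω) ∈ C <;>
      simp [Set.indicator_apply, Set.mem_preimage, Set.mem_setOf_eq, hω]
  have hKint : Integrable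
      (fun ω => Set.indicator {x | (g ω, x) ∈ C} (fun _ => (1 : ℝ)) (f ω)) P := by
    rw [hKeq]; exact (integrable_const (1 : ℝ)).indicator (hZmeas hC)
  have hgm : Measurable[MeasurableSpace.comap g inferInstance] g := fun t ht => ⟨t, ht, rfl⟩
  have hhgm : AEStronglyMeasurable[MeasurableSpace.comap g inferInstance]
      (fun ω => (μ {x | (g ω, x) ∈ C}).toReal) P :=
    ⟨fun ω => (μ {x | (g ω, x) ∈ C}).toReal, (hhm.comp hgm).stronglyMeasurable,
      Filter.EventuallyEq.rfl⟩
  have hbound : ∀ y : β, ‖(μ {x | (y, x) ∈ C}).toReal‖ ≤ 1 := by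
    intro y
    rw [Real.norm_eq_abs, abs_of_nonneg ENNReal.toReal_nonneg]
    calc (μ {x | (y, x) ∈ C}).toReal ≤ (1 : ENNReal).toReal :=
          ENNReal.toReal_mono ENNReal.one_ne_top prob_le_one
      _ = 1 := by simp
  have hhg_int : Integrable (fun ω => (μ {x | (g ω, x) ∈ C}).toReal) P :=
    (integrable_const (1 : ℝ)).mono' (hhm.comp hg).aestronglyMeasurable
      (Filter.Eventually.of_forall fun ω => hbound (g ω))
  refine ae_eq_condExp_of_forall_setIntegral_eq hm hKint
    (fun s _ _ => hhg_int.integrableOn) (fun s hs _ => ?_) hhgm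
  obtain ⟨t, ht, rfl⟩ := hs
  have hprod : Measure.map (fun ω => (g ω, f ω)) P = (Measure.map g P).prod μ := by
    rw [← hlawf]
    exact (indepFun_iff_map_prod_eq_prod_map_map hg.aemeasurable hf.aemeasurable).1 hfg
  have hDmeas : MeasurableSet ((t ×ˢ (Set.univ : Set α)) ∩ C) :=
    (ht.prod MeasurableSet.univ).inter hC
  have hGint : Integrable (Set.indicator ((t ×ˢ (Set.univ : Set α)) ∩ C) fun _ => (1 : ℝ))
      ((Measure.map g P).prod μ) := (integrable_const 1).indicator hDmeas
  have key1 : ∫ ω in g ⁻¹' t,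
        Set.indicator {x | (g ω, x) ∈ C} (fun _ => (1 : ℝ)) (f ω) ∂P
      = ∫ ω, Set.indicator ((t ×ˢ (Set.univ : Set α)) ∩ C) (fun _ => (1 : ℝ)) (g ω, f ω) ∂P := by
    rw [← integral_indicator (hg ht)]
    congr 1
    funext ω
    by_cases h1 : g ω ∈ t <;> by_cases h2 : (g ω, f ω) ∈ C <;>
      simp [Set.indicator_apply, h1, h2]
  have key2 : ∫ ω, Set.indicator ((t ×ˢ (Set.univ : Set α)) ∩ C) (fun _ => (1 : ℝ)) (g ω, f ω) ∂P
      = ∫ p, Set.indicator ((t ×ˢ (Set.univ : Set α)) ∩ C) (fun _ => (1 : ℝ)) p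
          ∂((Measure.map g P).prod μ) := by
    rw [← hprod]
    exact (integral_map hZmeas.aemeasurable
      (measurable_const.indicator hDmeas).aestronglyMeasurable).symm
  have key3 : ∫ p, Set.indicator ((t ×ˢ (Set.univ : Set α)) ∩ C) (fun _ => (1 : ℝ)) p
          ∂((Measure.map g P).prod μ)
      = ∫ y, Set.indicator t (fun y => (μ {x | (y, x) ∈ C}).toReal) y ∂(Measure.map g P) := by
    rw [integral_prod _ hGint]
    congr 1
    funext y
    by_cases hy : y ∈ t
    · have hfun : (fun x => Set.indicator ((t ×ˢ (Set.univ : Set α)) ∩ C)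
            (fun _ => (1 : ℝ)) (y, x))
          = Set.indicator {x | (y, x) ∈ C} (fun _ => (1 : ℝ)) := by
        funext x
        by_cases hx : (y, x) ∈ C <;> simp [Set.indicator_apply, hy, hx]
      have hsec : MeasurableSet {x | (y, x) ∈ C} := hC.preimage measurable_prodMk_left
      rw [hfun, Set.indicator_of_mem hy]
      exact integral_indicator_one hsec
    · have hfun : (fun x => Set.indicator ((t ×ˢ (Set.univ : Set α)) ∩ C)
            (fun _ => (1 : ℝ)) (y, x)) = fun _ => (0 : ℝ) := by
        funext x
        simp [Set.indicator_apply, hy]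
      rw [hfun, Set.indicator_of_notMem hy]
      simp
  have key4 : ∫ y, Set.indicator t (fun y => (μ {x | (y, x) ∈ C}).toReal) y ∂(Measure.map g P)
      = ∫ ω in g ⁻¹' t, (μ {x | (g ω, x) ∈ C}).toReal ∂P := by
    rw [integral_indicator ht,
      setIntegral_map ht hhm.aestronglyMeasurable hg.aemeasurable]
  rw [← key4, ← key3, ← key2, ← key1]


/-- **Lemma A.2 of cascading exclusion.** With `Kᵢ` the leave-one-out indicators,
`Lᵢ` their conditional expectations given the remaining variables and `I' = Σ Lᵢ`,
one has `E|I'/n − μ(A(X₁,…,Xₙ))| ≤ 2δ'`. -/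
theorem cascading_exclusion_bias_lemma
    {S : Type*} [MeasurableSpace S] {Ω : Type*} [MeasurableSpace Ω]
    (P : Measure Ω) [IsProbabilityMeasure P]
    (μ : Measure S) [IsProbabilityMeasure μ]
    (n : ℕ) (hn : 3 ≤ n)
    (X : Fin n → Ω → S)
    (hmeas : ∀ i, Measurable (X i))
    (hindep : iIndepFun X P)
    (hlaw : ∀ i, Measure.map (X i) P = μ)
    (A : (Fin n → S) → Set S)
    (A' : (Fin (n - 1) → S) → Set S)
    (hAsym : ∀ (σ : Equiv.Perm (Fin n)) (x : Fin n → S), A (x ∘ σ) = A x)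
    (hA'sym : ∀ (σ : Equiv.Perm (Fin (n - 1))) (x : Fin (n - 1) → S), A' (x ∘ σ) = A' x)
    (hAmeas : MeasurableSet {q : (Fin n → S) × S | q.2 ∈ A q.1})
    (hA'meas : MeasurableSet {q : (Fin (n - 1) → S) × S | q.2 ∈ A' q.1})
    (δ' : ℝ)
    (hδ' : δ' = ∫ ω, (μ (symmDiff (A (fun j => X j ω))
        (A' (fun j => X (Fin.castLE (Nat.sub_le n 1) j) ω)))).toReal ∂P)
    (K : Fin n → Ω → ℝ)
    (hK : ∀ i ω, K i ω =
      Set.indicator (A' (fun j => X (skipIdx i j) ω)) (fun _ => (1 : ℝ)) (X i ω))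
    (L : Fin n → Ω → ℝ)
    (hL : ∀ i, L i =
      MeasureTheory.condExp
        (MeasurableSpace.comap (fun ω => fun j : Fin (n - 1) => X (skipIdx i j) ω)
          MeasurableSpace.pi) P (K i)) :
    ∫ ω, |(∑ i : Fin n, L i ω) / n - (μ (A (fun j => X j ω))).toReal| ∂P ≤ 2 * δ' := by
  obtain ⟨m, rfl⟩ : ∃ m, n = m + 1 := ⟨n - 1, by omega⟩
  clear hn
  -- basic objects
  have hXX : Measurable (fun ω (i : Fin (m + 1)) => X i ω) := measurable_pi_lambda _ hmeas
  have hmap : Measure.map (fun ω (i : Fin (m + 1)) => X i ω) P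
      = Measure.pi (fun _ : Fin (m + 1) => μ) := iid_map_eq_pi P μ X hmeas hindep hlaw
  -- the functions G i
  have hWmeas : ∀ i : Fin (m + 1), MeasurableSet {p : (Fin (m + 1) → S) × S |
      p.2 ∈ symmDiff (A p.1) (A' (fun j => p.1 (skipIdx i j)))} := by
    intro i
    have hr : Measurable (fun p : (Fin (m + 1) → S) × S =>
        ((fun j => p.1 (skipIdx i j), p.2) : (Fin (m + 1 - 1) → S) × S)) :=
      Measurable.prodMk
        (measurable_pi_lambda _ fun j => (measurable_pi_apply _).comp measurable_fst)
        measurable_snd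
    have h2 : MeasurableSet {p : (Fin (m + 1) → S) × S |
        p.2 ∈ A' (fun j => p.1 (skipIdx i j))} := hA'meas.preimage hr
    have hset : {p : (Fin (m + 1) → S) × S |
        p.2 ∈ symmDiff (A p.1) (A' (fun j => p.1 (skipIdx i j)))}
        = symmDiff {p : (Fin (m + 1) → S) × S | p.2 ∈ A p.1}
            {p : (Fin (m + 1) → S) × S | p.2 ∈ A' (fun j => p.1 (skipIdx i j))} := by
      ext p; simp [Set.mem_symmDiff]
    rw [hset]
    exact hAmeas.symmDiff h2
  have hGmeas : ∀ i : Fin (m + 1), Measurable (fun x : Fin (m + 1) → S =>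
      (μ (symmDiff (A x) (A' (fun j => x (skipIdx i j))))).toReal) := by
    intro i
    exact (measurable_measure_prodMk_left (hWmeas i)).ennreal_toReal
  have hnormle : ∀ s : Set S, ‖(μ s).toReal‖ ≤ 1 := by
    intro s
    rw [Real.norm_eq_abs, abs_of_nonneg ENNReal.toReal_nonneg]
    calc (μ s).toReal ≤ (1 : ENNReal).toReal := ENNReal.toReal_mono ENNReal.one_ne_top prob_le_one
      _ = 1 := by simp
  have hGint : ∀ i : Fin (m + 1), Integrable (fun ω =>
      (μ (symmDiff (A (fun k => X k ω))
        (A' (fun j => X (skipIdx i j) ω)))).toReal) P := by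
    intro i
    refine (integrable_const (1 : ℝ)).mono' ?_ (Filter.Eventually.of_forall fun ω => hnormle _)
    exact ((hGmeas i).comp hXX).aestronglyMeasurable
  -- the mean function M
  have hMAmeas : Measurable (fun x : Fin (m + 1) → S => (μ (A x)).toReal) :=
    (measurable_measure_prodMk_left hAmeas).ennreal_toReal
  have hMmeas : Measurable (fun ω => (μ (A (fun j => X j ω))).toReal) :=
    hMAmeas.comp hXX
  have hMint : Integrable (fun ω => (μ (A (fun j => X j ω))).toReal) P :=
    (integrable_const (1 : ℝ)).mono' hMmeas.aestronglyMeasurable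
      (Filter.Eventually.of_forall fun ω => hnormle _)
  have hLint : ∀ i : Fin (m + 1), Integrable (L i) P := by
    intro i; rw [hL i]; exact integrable_condExp
  -- independence of the leave-one-out vector from the remaining variable
  have hYmeas : ∀ i : Fin (m + 1),
      Measurable (fun ω (j : Fin (m + 1 - 1)) => X (skipIdx i j) ω) :=
    fun i => measurable_pi_lambda _ fun j => hmeas _
  have hYX : ∀ i : Fin (m + 1),
      IndepFun (fun ω (j : Fin (m + 1 - 1)) => X (skipIdx i j) ω) (X i) P := by
    intro i
    have h0 := hindep.indepFun_finset ({i}ᶜ) {i} (by simp) hmeas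
    have h1 := h0.comp
      (φ := fun v : (({i}ᶜ : Finset (Fin (m + 1))) → S) => fun j : Fin (m + 1 - 1) =>
        v ⟨skipIdx i j, by simp [skipIdx_ne]⟩)
      (ψ := fun v : (({i} : Finset (Fin (m + 1))) → S) => v ⟨i, by simp⟩)
      (_mγ' := inferInstance)
      (measurable_pi_lambda _ fun j => measurable_pi_apply _) (measurable_pi_apply _)
    exact h1
  -- Step 1: identification of the conditional expectations
  have step1 : ∀ i : Fin (m + 1), L i =ᵐ[P]
      fun ω => (μ (A' (fun j => X (skipIdx i j) ω))).toReal := by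
    intro i
    have hfr := condexp_freeze P μ (X i)
      (fun ω (j : Fin (m + 1 - 1)) => X (skipIdx i j) ω)
      (hmeas i) (hYmeas i) (hYX i) (hlaw i) hA'meas
    have hKfun : K i = fun ω => Set.indicator
        {x | ((fun j : Fin (m + 1 - 1) => X (skipIdx i j) ω), x)
            ∈ {q : (Fin (m + 1 - 1) → S) × S | q.2 ∈ A' q.1}}
        (fun _ => (1 : ℝ)) (X i ω) := by
      funext ω; rw [hK i ω]; rfl
    rw [hL i, hKfun]
    exact hfr.symm
  -- Step 2: each integral equals δ'
  have hlastskip : ∀ j : Fin (m + 1 - 1),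
      skipIdx (Fin.last m) j = Fin.castLE (Nat.sub_le (m + 1) 1) j := by
    intro j
    rw [skipIdx_eq_succAbove, Fin.succAbove_last_apply]
    rfl
  have hfunlast : ∀ ω, (fun j : Fin (m + 1 - 1) =>
      X (Fin.castLE (Nat.sub_le (m + 1) 1) j) ω) = fun j => X (skipIdx (Fin.last m) j) ω := by
    intro ω; funext j; rw [hlastskip j]
  have hδ0 : δ' = ∫ ω, (μ (symmDiff (A (fun k => X k ω))
      (A' (fun j => X (skipIdx (Fin.last m) j) ω)))).toReal ∂P := by
    rw [hδ']
    exact integral_congr_ae (Filter.Eventually.of_forall fun ω => by simp only [hfunlast ω])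
  have hint1 : ∀ k : Fin (m + 1), ∫ ω, (μ (symmDiff (A (fun i => X i ω))
        (A' (fun j => X (skipIdx k j) ω)))).toReal ∂P
      = ∫ x, (μ (symmDiff (A x) (A' (fun j => x (skipIdx k j))))).toReal
          ∂(Measure.pi (fun _ : Fin (m + 1) => μ)) := by
    intro k
    rw [← hmap, integral_map hXX.aemeasurable (hGmeas k).aestronglyMeasurable]
  have hδeq : ∀ i : Fin (m + 1), ∫ ω, (μ (symmDiff (A (fun k => X k ω))
      (A' (fun j => X (skipIdx i j) ω)))).toReal ∂P = δ' := by
    intro i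
    set σ : Equiv.Perm (Fin (m + 1)) :=
      (finSuccEquiv' (Fin.last m)).trans (finSuccEquiv' i).symm with hσ
    have hσmeas : Measurable (fun x : Fin (m + 1) → S => x ∘ σ) :=
      measurable_pi_lambda _ fun j => measurable_pi_apply _
    have hσab : ∀ j : Fin m, σ (Fin.castSucc j) = i.succAbove j := by
      intro j
      rw [hσ]
      simp only [Equiv.trans_apply]
      rw [← Fin.succAbove_last_apply j, finSuccEquiv'_succAbove, finSuccEquiv'_symm_some]
    have hGcomp : ∀ x : Fin (m + 1) → S,
        (μ (symmDiff (A (x ∘ σ)) (A' (fun j => (x ∘ σ) (skipIdx (Fin.last m) j))))).toReal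
        = (μ (symmDiff (A x) (A' (fun j => x (skipIdx i j))))).toReal := by
      intro x
      have harg : (fun j : Fin (m + 1 - 1) => (x ∘ σ) (skipIdx (Fin.last m) j))
          = fun j => x (skipIdx i j) := by
        funext j
        show x (σ (skipIdx (Fin.last m) j)) = x (skipIdx i j)
        rw [skipIdx_eq_succAbove (Fin.last m) j, skipIdx_eq_succAbove i j, ← hσab j,
          Fin.succAbove_last_apply]
      rw [hAsym σ x, harg]
    have hmp : Measure.map (fun x : Fin (m + 1) → S => x ∘ σ)
        (Measure.pi (fun _ : Fin (m + 1) => μ)) = Measure.pi (fun _ : Fin (m + 1) => μ) :=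
      pi_map_comp_perm μ σ
    have h2 : ∫ x, (μ (symmDiff (A x) (A' (fun j => x (skipIdx (Fin.last m) j))))).toReal
          ∂(Measure.pi (fun _ : Fin (m + 1) => μ))
        = ∫ x, (μ (symmDiff (A (x ∘ σ))
            (A' (fun j => (x ∘ σ) (skipIdx (Fin.last m) j))))).toReal
          ∂(Measure.pi (fun _ : Fin (m + 1) => μ)) := by
      conv_lhs => rw [← hmp]
      exact integral_map hσmeas.aemeasurable (hGmeas (Fin.last m)).aestronglyMeasurable
    have h3 : ∫ x, (μ (symmDiff (A (x ∘ σ))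
            (A' (fun j => (x ∘ σ) (skipIdx (Fin.last m) j))))).toReal
          ∂(Measure.pi (fun _ : Fin (m + 1) => μ))
        = ∫ x, (μ (symmDiff (A x) (A' (fun j => x (skipIdx i j))))).toReal
          ∂(Measure.pi (fun _ : Fin (m + 1) => μ)) :=
      integral_congr_ae (Filter.Eventually.of_forall fun x => hGcomp x)
    rw [hint1 i, ← h3, ← h2, ← hint1 (Fin.last m), ← hδ0]
  -- Step 3: per-index bound
  have hper : ∀ i : Fin (m + 1),
      ∫ ω, |L i ω - (μ (A (fun j => X j ω))).toReal| ∂P ≤ δ' := by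
    intro i
    have hcongr : (fun ω => |L i ω - (μ (A (fun j => X j ω))).toReal|)
        =ᵐ[P] fun ω => |(μ (A' (fun j => X (skipIdx i j) ω))).toReal
            - (μ (A (fun j => X j ω))).toReal| := by
      filter_upwards [step1 i] with ω hω
      rw [hω]
    rw [integral_congr_ae hcongr]
    have hle : ∀ ω, |(μ (A' (fun j => X (skipIdx i j) ω))).toReal
        - (μ (A (fun j => X j ω))).toReal|
        ≤ (μ (symmDiff (A (fun k => X k ω)) (A' (fun j => X (skipIdx i j) ω)))).toReal :=
      fun ω => abs_toReal_measure_sub_le μ (A (fun k => X k ω))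
        (A' (fun j => X (skipIdx i j) ω))
    calc ∫ ω, |(μ (A' (fun j => X (skipIdx i j) ω))).toReal
          - (μ (A (fun j => X j ω))).toReal| ∂P
        ≤ ∫ ω, (μ (symmDiff (A (fun k => X k ω))
            (A' (fun j => X (skipIdx i j) ω)))).toReal ∂P :=
          integral_mono_of_nonneg (Filter.Eventually.of_forall fun ω => abs_nonneg _)
            (hGint i) (Filter.Eventually.of_forall hle)
      _ = δ' := hδeq i
  -- Step 4: assembly
  have hδnn : 0 ≤ δ' := by
    rw [hδ']
    exact integral_nonneg fun ω => ENNReal.toReal_nonneg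
  have hc : (0 : ℝ) < ((m + 1 : ℕ) : ℝ) := by positivity
  have hptw : ∀ ω, |(∑ i : Fin (m + 1), L i ω) / ((m + 1 : ℕ) : ℝ)
      - (μ (A (fun j => X j ω))).toReal|
      ≤ (∑ i : Fin (m + 1), |L i ω - (μ (A (fun j => X j ω))).toReal|)
        / ((m + 1 : ℕ) : ℝ) := by
    intro ω
    have hsum : ∑ i : Fin (m + 1), (L i ω - (μ (A (fun j => X j ω))).toReal)
        = (∑ i : Fin (m + 1), L i ω)
          - ((m + 1 : ℕ) : ℝ) * (μ (A (fun j => X j ω))).toReal := by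
      rw [Finset.sum_sub_distrib, Finset.sum_const, Finset.card_univ, Fintype.card_fin,
        nsmul_eq_mul]
    have h1 : (∑ i : Fin (m + 1), L i ω) / ((m + 1 : ℕ) : ℝ)
        - (μ (A (fun j => X j ω))).toReal
        = (∑ i : Fin (m + 1), (L i ω - (μ (A (fun j => X j ω))).toReal))
          / ((m + 1 : ℕ) : ℝ) := by
      rw [hsum]
      field_simp
    rw [h1, abs_div, abs_of_pos hc]
    exact (div_le_div_iff_of_pos_right hc).2 (Finset.abs_sum_le_sum_abs _ _)
  have hRint : Integrable (fun ω =>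
      (∑ i : Fin (m + 1), |L i ω - (μ (A (fun j => X j ω))).toReal|)
        / ((m + 1 : ℕ) : ℝ)) P :=
    (integrable_finset_sum _ fun i _ => ((hLint i).sub hMint).abs).div_const _
  have hmain : ∫ ω, |(∑ i : Fin (m + 1), L i ω) / ((m + 1 : ℕ) : ℝ)
      - (μ (A (fun j => X j ω))).toReal| ∂P ≤ δ' := by
    calc ∫ ω, |(∑ i : Fin (m + 1), L i ω) / ((m + 1 : ℕ) : ℝ)
          - (μ (A (fun j => X j ω))).toReal| ∂P
        ≤ ∫ ω, (∑ i : Fin (m + 1), |L i ω - (μ (A (fun j => X j ω))).toReal|)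
            / ((m + 1 : ℕ) : ℝ) ∂P :=
          integral_mono_of_nonneg (Filter.Eventually.of_forall fun ω => abs_nonneg _)
            hRint (Filter.Eventually.of_forall hptw)
      _ = (∑ i : Fin (m + 1),
            ∫ ω, |L i ω - (μ (A (fun j => X j ω))).toReal| ∂P) / ((m + 1 : ℕ) : ℝ) := by
          have hint' : ∀ i ∈ (Finset.univ : Finset (Fin (m + 1))),
              Integrable (fun ω => |L i ω - (μ (A (fun j => X j ω))).toReal|) P :=
            fun i _ => ((hLint i).sub hMint).abs
          rw [integral_div, integral_finset_sum _ hint']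
      _ ≤ (∑ _i : Fin (m + 1), δ') / ((m + 1 : ℕ) : ℝ) :=
          (div_le_div_iff_of_pos_right hc).2 (Finset.sum_le_sum fun i _ => hper i)
      _ = δ' := by
          rw [Finset.sum_const, Finset.card_univ, Fintype.card_fin, nsmul_eq_mul]
          field_simp
  calc ∫ ω, |(∑ i : Fin (m + 1), L i ω) / ((m + 1 : ℕ) : ℝ)
      - (μ (A (fun j => X j ω))).toReal| ∂P ≤ δ' := hmain
    _ ≤ 2 * δ' := by linarith


end
end

section
/- Let (S, ⪯) be a partially ordered set and let T ⊆ S be a finite up-set (i.e., ↑T = T). Let X₁,…,Xₙ (n ≥ 3) be i.i.d. uniform random points from T, let Nₙ := #{1 ≤ i ≤ n : Xⱼ ⪯ Xᵢ for some j ≠ i}, and define the estimator |T|̂ := n · |↑{X₁,…,Xₙ}| / Nₙ. Then E[ (Nₙ²/n) · (1 − |T|̂/|T|)² ] ≤ 8/e + 1/2. -/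
open MeasureTheory ProbabilityTheory

noncomputable section

section UpsetAuxDev
open Finset
open scoped Classical
namespace UpsetAux

def ind (p : Prop) : ℝ := if p then 1 else 0

lemma ind_nonneg (p : Prop) : 0 ≤ ind p := by unfold ind; split <;> norm_num
lemma ind_le_one (p : Prop) : ind p ≤ 1 := by unfold ind; split <;> norm_num
lemma ind_true {p : Prop} (h : p) : ind p = 1 := by simp [ind, h]
lemma ind_false {p : Prop} (h : ¬ p) : ind p = 0 := by simp [ind, h]
lemma ind_congr {p q : Prop} (h : p ↔ q) : ind p = ind q := by simp only [ind, h]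
lemma ind_mul_ind (p q : Prop) : ind p * ind q = ind (p ∧ q) := by
  unfold ind; by_cases hp : p <;> by_cases hq : q <;> simp [hp, hq]

lemma prod_ind {α : Type*} (s : Finset α) (p : α → Prop) :
    ∏ j ∈ s, ind (p j) = ind (∀ j ∈ s, p j) := by
  by_cases h : ∀ j ∈ s, p j
  · rw [ind_true h]
    exact Finset.prod_eq_one fun j hj => ind_true (h j hj)
  · rw [ind_false h]
    push_neg at h
    obtain ⟨j, hj, hpj⟩ := h
    exact Finset.prod_eq_zero hj (ind_false hpj)

lemma sum_ind_eq_single {α : Type*} {s : Finset α} {a : α} (ha : a ∈ s) (p : α → Prop) :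
    ∑ x ∈ s, ind (x = a ∧ p x) = ind (p a) := by
  rw [Finset.sum_eq_single_of_mem a ha (fun x _ hx => ind_false (fun hc => hx hc.1))]
  exact ind_congr (by tauto)

lemma sum_ind_one {α : Type*} {s : Finset α} {a : α} (ha : a ∈ s) :
    ∑ x ∈ s, ind (x = a) = 1 := by
  have h := sum_ind_eq_single ha (fun _ => True)
  simp only [and_true] at h
  rw [h, ind_true trivial]

lemma sum_ind_mem {α : Type*} (s B : Finset α) (hB : B ⊆ s) (p : α → Prop)
    (hp : ∀ x ∈ s, (p x ↔ x ∉ B)) :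
    ∑ x ∈ s, ind (p x) = (s.card : ℝ) - (B.card : ℝ) := by
  have h1 : ∀ x ∈ s, ind (p x) = 1 - ind (x ∈ B) := by
    intro x hx
    by_cases h : x ∈ B
    · rw [ind_true h, ind_false (by rw [hp x hx]; simpa)]; ring
    · rw [ind_false h, ind_true (by rw [hp x hx]; exact h)]; ring
  rw [Finset.sum_congr rfl h1, Finset.sum_sub_distrib, Finset.sum_const, nsmul_eq_mul, mul_one]
  have h2 : ∑ x ∈ s, ind (x ∈ B) = (B.card : ℝ) := by
    rw [← Finset.sum_subset hB (fun x _ hx => ind_false hx)]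
    rw [Finset.sum_congr rfl (fun x hx => ind_true hx), Finset.sum_const, nsmul_eq_mul, mul_one]
  rw [h2]

variable {S : Type*} [PartialOrder S] {n : ℕ}

def w (y : S) (t : Fin n → S) : ℝ := ∏ i, ind (¬ t i ≤ y)
def c (i : Fin n) (t : Fin n → S) : ℝ := ∏ j, ind (j = i ∨ ¬ t j ≤ t i)

variable (Tf : Finset S)

def D (a : S) : Finset S := Tf.filter (fun x => x ≤ a)
def u (a b : S) : ℕ := (D Tf a ∪ D Tf b).card

/-- `m - u a b` as a real number. -/
def f (a b : S) : ℝ := (Tf.card : ℝ) - (u Tf a b : ℝ)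

lemma D_subset (a : S) : D Tf a ⊆ Tf := Finset.filter_subset _ _
lemma union_D_subset (a b : S) : D Tf a ∪ D Tf b ⊆ Tf :=
  Finset.union_subset (D_subset Tf a) (D_subset Tf b)
lemma u_le (a b : S) : u Tf a b ≤ Tf.card := Finset.card_le_card (union_D_subset Tf a b)
lemma u_comm (a b : S) : u Tf a b = u Tf b a := by rw [u, u, Finset.union_comm]
lemma f_comm (a b : S) : f Tf a b = f Tf b a := by rw [f, f, u_comm]
lemma f_nonneg (a b : S) : 0 ≤ f Tf a b := by
  have h := u_le Tf a b
  rw [f, sub_nonneg]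
  exact_mod_cast h
lemma f_le (a b : S) : f Tf a b ≤ (Tf.card : ℝ) := by
  have : (0:ℝ) ≤ (u Tf a b : ℝ) := Nat.cast_nonneg _
  rw [f]; linarith
lemma u_self (a : S) : u Tf a a = (D Tf a).card := by rw [u, Finset.union_self]
lemma one_le_d {a : S} (ha : a ∈ Tf) : 1 ≤ (D Tf a).card :=
  Finset.card_pos.2 ⟨a, by simp [D, ha]⟩
lemma one_le_u {a : S} (ha : a ∈ Tf) (b : S) : 1 ≤ u Tf a b :=
  le_trans (one_le_d Tf ha) (Finset.card_le_card (Finset.subset_union_left))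

lemma sum_ind_not_le (y z : S) :
    ∑ x ∈ Tf, ind (¬ x ≤ y ∧ ¬ x ≤ z) = f Tf y z := by
  apply sum_ind_mem Tf _ (union_D_subset Tf y z)
  intro x hx
  simp only [Finset.mem_union, D, Finset.mem_filter]
  tauto

lemma prod_if_single (i : Fin n) (A B : ℝ) :
    ∏ j : Fin n, (if j = i then A else B) = A * B ^ (n - 1) := by
  rw [← Finset.mul_prod_erase univ _ (mem_univ i), if_pos rfl]
  congr 1
  rw [Finset.prod_congr rfl (fun j hj => if_neg (Finset.ne_of_mem_erase hj)),
    Finset.prod_const, Finset.card_erase_of_mem (mem_univ i), Finset.card_univ,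
    Fintype.card_fin]

lemma prod_if_pair {i j : Fin n} (hij : i ≠ j) (A B C : ℝ) :
    ∏ k : Fin n, (if k = i then A else if k = j then B else C) = A * B * C ^ (n - 2) := by
  rw [← Finset.mul_prod_erase univ _ (mem_univ i), if_pos rfl]
  rw [← Finset.mul_prod_erase (univ.erase i) _ (Finset.mem_erase.2 ⟨(Ne.symm hij), mem_univ j⟩)]
  rw [if_neg (Ne.symm hij), if_pos rfl, ← mul_assoc]
  congr 1
  have hstep : ∀ k ∈ (univ.erase i).erase j, (if k = i then A else if k = j then B else C) = C := by
    intro k hk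
    have hk2 := Finset.mem_erase.1 hk
    have hk3 := Finset.mem_erase.1 hk2.2
    rw [if_neg hk3.1, if_neg hk2.1]
  rw [Finset.prod_congr rfl hstep, Finset.prod_const,
    Finset.card_erase_of_mem (Finset.mem_erase.2 ⟨hij.symm, mem_univ j⟩),
    Finset.card_erase_of_mem (mem_univ i), Finset.card_univ, Fintype.card_fin]
  congr 1


section Klemmas
variable {S : Type*} [PartialOrder S] {n : ℕ} (Tf : Finset S)

abbrev pF (Tf : Finset S) (n : ℕ) : Finset (Fin n → S) := Fintype.piFinset (fun _ : Fin n => Tf)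

lemma K1 (y z : S) :
    ∑ t ∈ pF Tf n, w y t * w z t = (f Tf y z) ^ n := by
  have h1 : ∀ t ∈ pF Tf n, w y t * w z t = ∏ i, ind (¬ t i ≤ y ∧ ¬ t i ≤ z) := by
    intro t _
    rw [w, w, ← Finset.prod_mul_distrib]
    exact Finset.prod_congr rfl fun i _ => ind_mul_ind _ _
  calc ∑ t ∈ pF Tf n, w y t * w z t
      = ∑ t ∈ pF Tf n, ∏ i, ind (¬ t i ≤ y ∧ ¬ t i ≤ z) := Finset.sum_congr rfl h1
    _ = ∏ _i : Fin n, ∑ x ∈ Tf, ind (¬ x ≤ y ∧ ¬ x ≤ z) :=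
        Finset.sum_prod_piFinset Tf (fun (_ : Fin n) (x : S) => ind (¬ x ≤ y ∧ ¬ x ≤ z))
    _ = ∏ _i : Fin n, f Tf y z := Finset.prod_congr rfl fun i _ => sum_ind_not_le Tf y z
    _ = (f Tf y z) ^ n := by rw [Finset.prod_const, Finset.card_univ, Fintype.card_fin]

omit [PartialOrder S] in
lemma insertion (i : Fin n) (F : (Fin n → S) → ℝ) :
    ∑ t ∈ pF Tf n, F t = ∑ a ∈ Tf, ∑ t ∈ pF Tf n, ind (t i = a) * F t := by
  rw [Finset.sum_comm]
  apply Finset.sum_congr rfl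
  intro t ht
  rw [← Finset.sum_mul]
  have h1 : ∑ a ∈ Tf, ind (t i = a) = 1 := by
    rw [Finset.sum_congr rfl (fun a _ => ind_congr (eq_comm))]
    exact sum_ind_one ((Fintype.mem_piFinset.1 ht) i)
  rw [h1, one_mul]

lemma K2 (y : S) (i : Fin n) :
    ∑ t ∈ pF Tf n, w y t * c i t
      = ∑ a ∈ Tf, ind (¬ a ≤ y) * (f Tf y a) ^ (n - 1) := by
  rw [insertion Tf i]
  refine Finset.sum_congr rfl (fun a ha => ?_)
  have hpt : ∀ t ∈ pF Tf n, ind (t i = a) * (w y t * c i t)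
      = ∏ j : Fin n, (if j = i then ind (t j = a ∧ ¬ t j ≤ y) else ind (¬ t j ≤ y ∧ ¬ t j ≤ a)) := by
    intro t _
    by_cases h : t i = a
    · rw [ind_true h, one_mul, w, c, ← Finset.prod_mul_distrib]
      refine Finset.prod_congr rfl (fun j _ => ?_)
      by_cases hj : j = i
      · rw [if_pos hj]
        subst hj
        rw [ind_true (Or.inl rfl), mul_one]
        exact ind_congr (by simp [h])
      · rw [if_neg hj, ind_mul_ind]
        exact ind_congr (by rw [h]; simp [hj])
    · rw [ind_false h, zero_mul]
      symm
      refine Finset.prod_eq_zero (Finset.mem_univ i) ?_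
      rw [if_pos rfl]
      exact ind_false (fun hc => h hc.1)
  have hsum : ∀ j : Fin n, (∑ x ∈ Tf, (if j = i then ind (x = a ∧ ¬ x ≤ y)
      else ind (¬ x ≤ y ∧ ¬ x ≤ a))) = if j = i then ind (¬ a ≤ y) else f Tf y a := by
    intro j
    by_cases hj : j = i
    · rw [if_pos hj, Finset.sum_congr rfl (fun x _ => if_pos hj)]
      exact sum_ind_eq_single ha _
    · rw [if_neg hj, Finset.sum_congr rfl (fun x _ => if_neg hj)]
      exact sum_ind_not_le Tf y a
  calc ∑ t ∈ pF Tf n, ind (t i = a) * (w y t * c i t)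
      = ∑ t ∈ pF Tf n, ∏ j : Fin n,
          (if j = i then ind (t j = a ∧ ¬ t j ≤ y) else ind (¬ t j ≤ y ∧ ¬ t j ≤ a)) :=
        Finset.sum_congr rfl hpt
    _ = ∏ j : Fin n, ∑ x ∈ Tf,
          (if j = i then ind (x = a ∧ ¬ x ≤ y) else ind (¬ x ≤ y ∧ ¬ x ≤ a)) :=
        Finset.sum_prod_piFinset Tf (fun (j : Fin n) (x : S) =>
          if j = i then ind (x = a ∧ ¬ x ≤ y) else ind (¬ x ≤ y ∧ ¬ x ≤ a))
    _ = ∏ j : Fin n, (if j = i then ind (¬ a ≤ y) else f Tf y a) :=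
        Finset.prod_congr rfl (fun j _ => hsum j)
    _ = ind (¬ a ≤ y) * (f Tf y a) ^ (n - 1) := prod_if_single i _ _

lemma K4 (i : Fin n) :
    ∑ t ∈ pF Tf n, c i t = ∑ a ∈ Tf, (f Tf a a) ^ (n - 1) := by
  rw [insertion Tf i]
  refine Finset.sum_congr rfl (fun a ha => ?_)
  have hpt : ∀ t ∈ pF Tf n, ind (t i = a) * c i t
      = ∏ j : Fin n, (if j = i then ind (t j = a) else ind (¬ t j ≤ a ∧ ¬ t j ≤ a)) := by
    intro t _
    by_cases h : t i = a
    · rw [ind_true h, one_mul, c]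
      refine Finset.prod_congr rfl (fun j _ => ?_)
      by_cases hj : j = i
      · rw [if_pos hj]
        subst hj
        rw [ind_true (Or.inl rfl)]
        exact (ind_true h).symm
      · rw [if_neg hj]
        exact ind_congr (by rw [h]; simp [hj])
    · rw [ind_false h, zero_mul]
      symm
      refine Finset.prod_eq_zero (Finset.mem_univ i) ?_
      rw [if_pos rfl]
      exact ind_false h
  have hsum : ∀ j : Fin n, (∑ x ∈ Tf, (if j = i then ind (x = a)
      else ind (¬ x ≤ a ∧ ¬ x ≤ a))) = if j = i then 1 else f Tf a a := by
    intro j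
    by_cases hj : j = i
    · rw [if_pos hj, Finset.sum_congr rfl (fun x _ => if_pos hj)]
      exact sum_ind_one ha
    · rw [if_neg hj, Finset.sum_congr rfl (fun x _ => if_neg hj)]
      exact sum_ind_not_le Tf a a
  calc ∑ t ∈ pF Tf n, ind (t i = a) * c i t
      = ∑ t ∈ pF Tf n, ∏ j : Fin n,
          (if j = i then ind (t j = a) else ind (¬ t j ≤ a ∧ ¬ t j ≤ a)) :=
        Finset.sum_congr rfl hpt
    _ = ∏ j : Fin n, ∑ x ∈ Tf, (if j = i then ind (x = a) else ind (¬ x ≤ a ∧ ¬ x ≤ a)) :=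
        Finset.sum_prod_piFinset Tf (fun (j : Fin n) (x : S) =>
          if j = i then ind (x = a) else ind (¬ x ≤ a ∧ ¬ x ≤ a))
    _ = ∏ j : Fin n, (if j = i then 1 else f Tf a a) :=
        Finset.prod_congr rfl (fun j _ => hsum j)
    _ = 1 * (f Tf a a) ^ (n - 1) := prod_if_single i _ _
    _ = (f Tf a a) ^ (n - 1) := one_mul _

lemma K3 {i j : Fin n} (hij : i ≠ j) :
    ∑ t ∈ pF Tf n, c i t * c j t
      = ∑ a ∈ Tf, ∑ b ∈ Tf, (ind (¬ a ≤ b) * ind (¬ b ≤ a)) * (f Tf a b) ^ (n - 2) := by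
  rw [insertion Tf i]
  refine Finset.sum_congr rfl (fun a ha => ?_)
  rw [insertion Tf j]
  refine Finset.sum_congr rfl (fun b hb => ?_)
  have hpt : ∀ t ∈ pF Tf n, ind (t j = b) * (ind (t i = a) * (c i t * c j t))
      = ∏ k : Fin n, (if k = i then ind (t k = a ∧ ¬ t k ≤ b)
          else if k = j then ind (t k = b ∧ ¬ t k ≤ a) else ind (¬ t k ≤ a ∧ ¬ t k ≤ b)) := by
    intro t _
    by_cases h1 : t i = a
    · by_cases h2 : t j = b
      · rw [ind_true h1, ind_true h2, one_mul, one_mul, c, c, ← Finset.prod_mul_distrib]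
        refine Finset.prod_congr rfl (fun k _ => ?_)
        rw [ind_mul_ind]
        by_cases hk1 : k = i
        · rw [if_pos hk1]
          subst hk1
          exact ind_congr (by rw [h1, h2]; simp [hij])
        · by_cases hk2 : k = j
          · rw [if_neg hk1, if_pos hk2]
            subst hk2
            exact ind_congr (by rw [h1, h2]; simp [hk1])
          · rw [if_neg hk1, if_neg hk2]
            exact ind_congr (by rw [h1, h2]; simp [hk1, hk2])
      · rw [ind_false h2, zero_mul]
        symm
        refine Finset.prod_eq_zero (Finset.mem_univ j) ?_
        rw [if_neg (Ne.symm hij), if_pos rfl]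
        exact ind_false (fun hc => h2 hc.1)
    · rw [ind_false h1, zero_mul, mul_zero]
      symm
      refine Finset.prod_eq_zero (Finset.mem_univ i) ?_
      rw [if_pos rfl]
      exact ind_false (fun hc => h1 hc.1)
  have hsum : ∀ k : Fin n, (∑ x ∈ Tf, (if k = i then ind (x = a ∧ ¬ x ≤ b)
      else if k = j then ind (x = b ∧ ¬ x ≤ a) else ind (¬ x ≤ a ∧ ¬ x ≤ b)))
      = if k = i then ind (¬ a ≤ b) else if k = j then ind (¬ b ≤ a) else f Tf a b := by
    intro k
    by_cases hk1 : k = i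
    · rw [if_pos hk1, Finset.sum_congr rfl (fun x _ => if_pos hk1)]
      exact sum_ind_eq_single ha _
    · by_cases hk2 : k = j
      · rw [if_neg hk1, if_pos hk2,
          Finset.sum_congr rfl (fun x _ => by rw [if_neg hk1, if_pos hk2])]
        exact sum_ind_eq_single hb _
      · rw [if_neg hk1, if_neg hk2,
          Finset.sum_congr rfl (fun x _ => by rw [if_neg hk1, if_neg hk2])]
        exact sum_ind_not_le Tf a b
  calc ∑ t ∈ pF Tf n, ind (t j = b) * (ind (t i = a) * (c i t * c j t))
      = ∑ t ∈ pF Tf n, ∏ k : Fin n, (if k = i then ind (t k = a ∧ ¬ t k ≤ b)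
          else if k = j then ind (t k = b ∧ ¬ t k ≤ a) else ind (¬ t k ≤ a ∧ ¬ t k ≤ b)) :=
        Finset.sum_congr rfl hpt
    _ = ∏ k : Fin n, ∑ x ∈ Tf, (if k = i then ind (x = a ∧ ¬ x ≤ b)
          else if k = j then ind (x = b ∧ ¬ x ≤ a) else ind (¬ x ≤ a ∧ ¬ x ≤ b)) :=
        Finset.sum_prod_piFinset Tf (fun (k : Fin n) (x : S) =>
          if k = i then ind (x = a ∧ ¬ x ≤ b)
          else if k = j then ind (x = b ∧ ¬ x ≤ a) else ind (¬ x ≤ a ∧ ¬ x ≤ b))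
    _ = ∏ k : Fin n, (if k = i then ind (¬ a ≤ b) else if k = j then ind (¬ b ≤ a) else f Tf a b) :=
        Finset.prod_congr rfl (fun k _ => hsum k)
    _ = (ind (¬ a ≤ b) * ind (¬ b ≤ a)) * (f Tf a b) ^ (n - 2) := prod_if_pair hij _ _ _

lemma c_sq (i : Fin n) (t : Fin n → S) : c i t * c i t = c i t := by
  rw [c, ← Finset.prod_mul_distrib]
  exact Finset.prod_congr rfl fun j _ => by rw [ind_mul_ind]; exact ind_congr and_self_iff

end Klemmas


section Assembly
variable {S : Type*} [PartialOrder S] {n : ℕ} (Tf : Finset S)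

def Wr (Tf : Finset S) (t : Fin n → S) : ℝ := ∑ y ∈ Tf, w y t
def Mr (t : Fin n → S) : ℝ := ∑ i : Fin n, c i t

def gg (Tf : Finset S) (n : ℕ) (p q : S) : ℝ :=
  ((n : ℝ) / (Tf.card : ℝ)) ^ 2 * (f Tf p q) ^ n
    - (2 * ((n : ℝ) ^ 2 / (Tf.card : ℝ))) * (ind (¬ q ≤ p) * (f Tf p q) ^ (n - 1))
    + ((n : ℝ) * ((n : ℝ) - 1)) * ((ind (¬ p ≤ q) * ind (¬ q ≤ p)) * (f Tf p q) ^ (n - 2))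

lemma hPW : ∑ t ∈ pF Tf n, (Wr Tf t) ^ 2 = ∑ p ∈ Tf, ∑ q ∈ Tf, (f Tf p q) ^ n := by
  have h : ∀ t ∈ pF Tf n, (Wr Tf t) ^ 2 = ∑ p ∈ Tf, ∑ q ∈ Tf, w p t * w q t := by
    intro t _; rw [Wr, sq, Finset.sum_mul_sum]
  rw [Finset.sum_congr rfl h, Finset.sum_comm]
  refine Finset.sum_congr rfl (fun p _ => ?_)
  rw [Finset.sum_comm]
  exact Finset.sum_congr rfl (fun q _ => K1 Tf p q)

lemma hWM : ∑ t ∈ pF Tf n, Wr Tf t * Mr t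
    = (n : ℝ) * ∑ p ∈ Tf, ∑ q ∈ Tf, ind (¬ q ≤ p) * (f Tf p q) ^ (n - 1) := by
  have h : ∀ t ∈ pF Tf n, Wr Tf t * Mr t = ∑ p ∈ Tf, ∑ i : Fin n, w p t * c i t := by
    intro t _; rw [Wr, Mr, Finset.sum_mul_sum]
  rw [Finset.sum_congr rfl h, Finset.sum_comm, Finset.mul_sum]
  refine Finset.sum_congr rfl (fun p _ => ?_)
  rw [Finset.sum_comm]
  have h2 : ∀ i ∈ (Finset.univ : Finset (Fin n)), ∑ t ∈ pF Tf n, w p t * c i t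
      = ∑ q ∈ Tf, ind (¬ q ≤ p) * (f Tf p q) ^ (n - 1) := fun i _ => K2 Tf p i
  rw [Finset.sum_congr rfl h2, Finset.sum_const, Finset.card_univ, Fintype.card_fin,
    nsmul_eq_mul]

lemma hMM (hn : 1 ≤ n) : ∑ t ∈ pF Tf n, (Mr t) ^ 2
    = (n : ℝ) * ∑ a ∈ Tf, (f Tf a a) ^ (n - 1)
      + ((n : ℝ) * ((n : ℝ) - 1)) *
        ∑ a ∈ Tf, ∑ b ∈ Tf, (ind (¬ a ≤ b) * ind (¬ b ≤ a)) * (f Tf a b) ^ (n - 2) := by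
  have h : ∀ t ∈ pF Tf n, (Mr t) ^ 2 = ∑ i : Fin n, ∑ j : Fin n, c i t * c j t := by
    intro t _; rw [Mr, sq, Finset.sum_mul_sum]
  rw [Finset.sum_congr rfl h, Finset.sum_comm]
  have h2 : ∀ i ∈ (Finset.univ : Finset (Fin n)), ∑ t ∈ pF Tf n, ∑ j : Fin n, c i t * c j t
      = ∑ a ∈ Tf, (f Tf a a) ^ (n - 1)
        + ((n : ℝ) - 1) * ∑ a ∈ Tf, ∑ b ∈ Tf,
            (ind (¬ a ≤ b) * ind (¬ b ≤ a)) * (f Tf a b) ^ (n - 2) := by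
    intro i _
    rw [Finset.sum_comm]
    rw [← Finset.add_sum_erase (Finset.univ : Finset (Fin n))
      (fun j => ∑ t ∈ pF Tf n, c i t * c j t) (Finset.mem_univ i)]
    have hii : ∑ t ∈ pF Tf n, c i t * c i t = ∑ a ∈ Tf, (f Tf a a) ^ (n - 1) := by
      rw [Finset.sum_congr rfl (fun t _ => c_sq i t)]
      exact K4 Tf i
    have hij : ∀ j ∈ (Finset.univ : Finset (Fin n)).erase i,
        ∑ t ∈ pF Tf n, c i t * c j t
          = ∑ a ∈ Tf, ∑ b ∈ Tf, (ind (¬ a ≤ b) * ind (¬ b ≤ a)) * (f Tf a b) ^ (n - 2) := by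
      intro j hj
      exact K3 Tf (Ne.symm (Finset.mem_erase.1 hj).1)
    rw [hii, Finset.sum_congr rfl hij, Finset.sum_const,
      Finset.card_erase_of_mem (Finset.mem_univ i), Finset.card_univ, Fintype.card_fin,
      nsmul_eq_mul]
    congr 2
    rw [Nat.cast_sub hn, Nat.cast_one]
  rw [Finset.sum_congr rfl h2, Finset.sum_const, Finset.card_univ, Fintype.card_fin,
    nsmul_eq_mul]
  ring

lemma S2_eq (hn : 1 ≤ n) :
    ∑ t ∈ pF Tf n, (((n : ℝ) / (Tf.card : ℝ)) * Wr Tf t - Mr t) ^ 2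
      = (∑ p ∈ Tf, ∑ q ∈ Tf, gg Tf n p q)
        + (n : ℝ) * ∑ a ∈ Tf, (f Tf a a) ^ (n - 1) := by
  have expand : ∀ t ∈ pF Tf n, (((n : ℝ) / (Tf.card : ℝ)) * Wr Tf t - Mr t) ^ 2
      = ((n : ℝ) / (Tf.card : ℝ)) ^ 2 * (Wr Tf t) ^ 2
        - (2 * ((n : ℝ) / (Tf.card : ℝ))) * (Wr Tf t * Mr t) + (Mr t) ^ 2 := by
    intro t _; ring
  have hg : ∑ p ∈ Tf, ∑ q ∈ Tf, gg Tf n p q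
      = ((n : ℝ) / (Tf.card : ℝ)) ^ 2 * (∑ p ∈ Tf, ∑ q ∈ Tf, (f Tf p q) ^ n)
        - (2 * ((n : ℝ) ^ 2 / (Tf.card : ℝ)))
            * (∑ p ∈ Tf, ∑ q ∈ Tf, ind (¬ q ≤ p) * (f Tf p q) ^ (n - 1))
        + ((n : ℝ) * ((n : ℝ) - 1)) * (∑ p ∈ Tf, ∑ q ∈ Tf,
            (ind (¬ p ≤ q) * ind (¬ q ≤ p)) * (f Tf p q) ^ (n - 2)) := by
    rw [Finset.mul_sum, Finset.mul_sum, Finset.mul_sum, ← Finset.sum_sub_distrib,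
      ← Finset.sum_add_distrib]
    refine Finset.sum_congr rfl (fun p _ => ?_)
    rw [Finset.mul_sum, Finset.mul_sum, Finset.mul_sum, ← Finset.sum_sub_distrib,
      ← Finset.sum_add_distrib]
    exact Finset.sum_congr rfl (fun q _ => rfl)
  rw [Finset.sum_congr rfl expand, Finset.sum_add_distrib, Finset.sum_sub_distrib,
    ← Finset.mul_sum, ← Finset.mul_sum, hPW, hWM, hMM Tf hn, hg]
  ring

end Assembly


section Analysis

lemma xexp_le {x : ℝ} (hx : 0 ≤ x) : x * Real.exp (-x) ≤ (Real.exp 1)⁻¹ := by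
  have h := Real.add_one_le_exp (x - 1)
  have h2 : x ≤ Real.exp (x - 1) := by linarith
  have h3 : Real.exp (x - 1) = Real.exp x * (Real.exp 1)⁻¹ := by
    rw [Real.exp_sub, div_eq_mul_inv]
  calc x * Real.exp (-x) ≤ Real.exp (x - 1) * Real.exp (-x) :=
        mul_le_mul_of_nonneg_right h2 (le_of_lt (Real.exp_pos _))
    _ = (Real.exp 1)⁻¹ := by
        rw [h3, Real.exp_neg]
        field_simp

lemma sexp_sq_le {c s : ℝ} (hc : 1 ≤ c) (hs : 0 ≤ s) :
    s ^ 2 * Real.exp (-(c * s)) ≤ 4 / (c ^ 2 * Real.exp 1 ^ 2) := by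
  have hc0 : (0 : ℝ) < c := by linarith
  have hxe := xexp_le (x := c * s / 2) (by positivity)
  have hsq : (c * s / 2 * Real.exp (-(c * s / 2))) ^ 2 ≤ ((Real.exp 1)⁻¹) ^ 2 :=
    pow_le_pow_left₀ (by positivity) hxe 2
  have e2 : (c * s / 2 * Real.exp (-(c * s / 2))) ^ 2
      = c ^ 2 * s ^ 2 / 4 * Real.exp (-(c * s)) := by
    rw [mul_pow, ← Real.exp_nat_mul]
    norm_num
    ring_nf
  have hsq2 : c ^ 2 * s ^ 2 / 4 * Real.exp (-(c * s)) ≤ (Real.exp 1 ^ 2)⁻¹ := by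
    rw [← e2, ← inv_pow]; exact hsq
  rw [le_div_iff₀ (by positivity)]
  have hinv : Real.exp 1 ^ 2 * (Real.exp 1 ^ 2)⁻¹ = 1 :=
    mul_inv_cancel₀ (by positivity)
  nlinarith [hsq2, Real.exp_pos (-(c * s)), sq_nonneg (Real.exp 1), Real.exp_pos 1,
    mul_le_mul_of_nonneg_right hsq2 (le_of_lt (by positivity : (0:ℝ) < Real.exp 1 ^ 2))]

lemma incomp_bound {m F : ℝ} (hm : 1 ≤ m) (hF0 : 0 ≤ F) (hFm : F ≤ m) {n : ℕ} (hn : 3 ≤ n) :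
    ((n : ℝ) / m) ^ 2 * F ^ n - (2 * ((n : ℝ) ^ 2 / m)) * F ^ (n - 1)
        + ((n : ℝ) * ((n : ℝ) - 1)) * F ^ (n - 2)
      ≤ (n : ℝ) ^ 2 * m ^ (n - 2) * (4 / (((n : ℝ) - 2) ^ 2 * Real.exp 1 ^ 2)) := by
  have hm0 : (0 : ℝ) < m := by linarith
  have hν3 : (3 : ℝ) ≤ (n : ℝ) := by exact_mod_cast hn
  have hpow1 : F ^ n = F ^ (n - 2) * F ^ 2 := by rw [← pow_add]; congr 1; omega
  have hpow2 : F ^ (n - 1) = F ^ (n - 2) * F := by rw [← pow_succ]; congr 1; omega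
  have hFk : 0 ≤ F ^ (n - 2) := pow_nonneg hF0 _
  have key : ((n : ℝ) / m) ^ 2 * F ^ 2 - 2 * ((n : ℝ) ^ 2 / m) * F + (n : ℝ) * ((n : ℝ) - 1)
      = (n : ℝ) ^ 2 * (1 - F / m) ^ 2 - (n : ℝ) := by field_simp; ring
  have step1 : ((n : ℝ) / m) ^ 2 * F ^ n - (2 * ((n : ℝ) ^ 2 / m)) * F ^ (n - 1)
        + ((n : ℝ) * ((n : ℝ) - 1)) * F ^ (n - 2)
      ≤ F ^ (n - 2) * ((n : ℝ) ^ 2 * (1 - F / m) ^ 2) := by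
    have e1 : ((n : ℝ) / m) ^ 2 * F ^ n - (2 * ((n : ℝ) ^ 2 / m)) * F ^ (n - 1)
          + ((n : ℝ) * ((n : ℝ) - 1)) * F ^ (n - 2)
        = F ^ (n - 2) * (((n : ℝ) / m) ^ 2 * F ^ 2 - 2 * ((n : ℝ) ^ 2 / m) * F
            + (n : ℝ) * ((n : ℝ) - 1)) := by rw [hpow1, hpow2]; ring
    rw [e1, key]
    nlinarith [mul_nonneg hFk (by linarith : (0 : ℝ) ≤ (n : ℝ))]
  set s : ℝ := 1 - F / m with hs
  have hs0 : 0 ≤ s := by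
    have : F / m ≤ 1 := (div_le_one hm0).2 hFm
    rw [hs]; linarith
  have hs1 : s ≤ 1 := by
    have : 0 ≤ F / m := div_nonneg hF0 (le_of_lt hm0)
    rw [hs]; linarith
  have hF : F = m * (1 - s) := by rw [hs]; field_simp; ring
  have h1s : 1 - s ≤ Real.exp (-s) := by
    have := Real.add_one_le_exp (-s); linarith
  have hFpow : F ^ (n - 2) ≤ m ^ (n - 2) * Real.exp (-(((n : ℝ) - 2) * s)) := by
    have hcast : ((n - 2 : ℕ) : ℝ) = (n : ℝ) - 2 := by
      rw [Nat.cast_sub (by omega)]; norm_num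
    calc F ^ (n - 2) = m ^ (n - 2) * (1 - s) ^ (n - 2) := by rw [hF, mul_pow]
      _ ≤ m ^ (n - 2) * Real.exp (-s) ^ (n - 2) := by
          apply mul_le_mul_of_nonneg_left (pow_le_pow_left₀ (by linarith) h1s _)
            (pow_nonneg (le_of_lt hm0) _)
      _ = m ^ (n - 2) * Real.exp (-(((n : ℝ) - 2) * s)) := by
          rw [← Real.exp_nat_mul, hcast]
          ring_nf
  have hscal : s ^ 2 * Real.exp (-(((n : ℝ) - 2) * s)) ≤ 4 / (((n : ℝ) - 2) ^ 2 * Real.exp 1 ^ 2) :=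
    sexp_sq_le (by linarith) hs0
  calc ((n : ℝ) / m) ^ 2 * F ^ n - (2 * ((n : ℝ) ^ 2 / m)) * F ^ (n - 1)
        + ((n : ℝ) * ((n : ℝ) - 1)) * F ^ (n - 2)
      ≤ F ^ (n - 2) * ((n : ℝ) ^ 2 * s ^ 2) := step1
    _ ≤ (m ^ (n - 2) * Real.exp (-(((n : ℝ) - 2) * s))) * ((n : ℝ) ^ 2 * s ^ 2) := by
        apply mul_le_mul_of_nonneg_right hFpow
        positivity
    _ = (n : ℝ) ^ 2 * m ^ (n - 2) * (s ^ 2 * Real.exp (-(((n : ℝ) - 2) * s))) := by ring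
    _ ≤ (n : ℝ) ^ 2 * m ^ (n - 2) * (4 / (((n : ℝ) - 2) ^ 2 * Real.exp 1 ^ 2)) := by
        apply mul_le_mul_of_nonneg_left hscal
        positivity

lemma comp_bound {m F ν : ℝ} (hm : 1 ≤ m) (hF0 : 0 ≤ F) (hFm : F ≤ m) (hν : 0 ≤ ν)
    {n : ℕ} (hn : 1 ≤ n) :
    2 * ((ν / m) ^ 2 * F ^ n) - 2 * ((ν ^ 2 / m) * F ^ (n - 1)) ≤ 0 := by
  have hm0 : (0 : ℝ) < m := by linarith
  have hp : F ^ n = F ^ (n - 1) * F := by rw [← pow_succ]; congr 1; omega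
  have e : 2 * ((ν / m) ^ 2 * F ^ n) - 2 * ((ν ^ 2 / m) * F ^ (n - 1))
      = (2 * (ν ^ 2 / m) * F ^ (n - 1)) * (F / m - 1) := by rw [hp]; field_simp
  rw [e]
  apply mul_nonpos_of_nonneg_of_nonpos
  · have h1 : (0 : ℝ) ≤ ν ^ 2 / m := div_nonneg (sq_nonneg ν) (le_of_lt hm0)
    have h2 : (0 : ℝ) ≤ F ^ (n - 1) := pow_nonneg hF0 _
    nlinarith
  · have : F / m ≤ 1 := (div_le_one hm0).2 hFm
    linarith

lemma diag_total {m : ℝ} (hm : 1 ≤ m) (n : ℕ) :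
    m * (((n : ℝ) / m) ^ 2 * (m - 1) ^ n) ≤ m ^ n * ((n : ℝ) * (Real.exp 1)⁻¹) := by
  have hm0 : (0 : ℝ) < m := by linarith
  have h1 : (m - 1) ^ n = m ^ n * (1 - 1 / m) ^ n := by
    rw [← mul_pow]
    congr 1
    field_simp
  have h2 : 1 - 1 / m ≤ Real.exp (-(1 / m)) := by
    have := Real.add_one_le_exp (-(1 / m)); linarith
  have h1m : 0 ≤ 1 - 1 / m := by
    have : 1 / m ≤ 1 := by rw [div_le_one hm0]; linarith
    linarith
  have h3 : (1 - 1 / m) ^ n ≤ Real.exp (-((n : ℝ) / m)) := by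
    calc (1 - 1 / m) ^ n ≤ Real.exp (-(1 / m)) ^ n := pow_le_pow_left₀ h1m h2 n
      _ = Real.exp (-((n : ℝ) / m)) := by rw [← Real.exp_nat_mul]; ring_nf
  have h5 := xexp_le (x := (n : ℝ) / m) (by positivity)
  have e1 : m * (((n : ℝ) / m) ^ 2 * (m - 1) ^ n)
      = m ^ n * ((n : ℝ) * (((n : ℝ) / m) * (1 - 1 / m) ^ n)) := by
    rw [h1]; field_simp
  rw [e1]
  apply mul_le_mul_of_nonneg_left _ (pow_nonneg (le_of_lt hm0) n)
  apply mul_le_mul_of_nonneg_left _ (Nat.cast_nonneg n)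
  calc ((n : ℝ) / m) * (1 - 1 / m) ^ n ≤ ((n : ℝ) / m) * Real.exp (-((n : ℝ) / m)) :=
        mul_le_mul_of_nonneg_left h3 (by positivity)
    _ ≤ (Real.exp 1)⁻¹ := h5

end Analysis


section Final
variable {S : Type*} [PartialOrder S]

lemma pair_bound (Tf : Finset S) {n : ℕ} (hn : 3 ≤ n) {p q : S} (hp : p ∈ Tf) (hq : q ∈ Tf) :
    gg Tf n p q + gg Tf n q p ≤ if p = q
      then 2 * (((n : ℝ) / (Tf.card : ℝ)) ^ 2 * ((Tf.card : ℝ) - 1) ^ n)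
      else 2 * ((n : ℝ) ^ 2 * (Tf.card : ℝ) ^ (n - 2)
        * (4 / (((n : ℝ) - 2) ^ 2 * Real.exp 1 ^ 2))) := by
  have hm : (1 : ℝ) ≤ (Tf.card : ℝ) := by
    have := Finset.card_pos.2 ⟨p, hp⟩
    exact_mod_cast this
  have hm0 : (0 : ℝ) < (Tf.card : ℝ) := by linarith
  have hF0 : 0 ≤ f Tf p q := f_nonneg Tf p q
  have hFm : f Tf p q ≤ (Tf.card : ℝ) := f_le Tf p q
  have hν0 : (0 : ℝ) ≤ (n : ℝ) := Nat.cast_nonneg n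
  have hBo : (0 : ℝ) ≤ 2 * ((n : ℝ) ^ 2 * (Tf.card : ℝ) ^ (n - 2)
      * (4 / (((n : ℝ) - 2) ^ 2 * Real.exp 1 ^ 2))) := by positivity
  by_cases hpq : p = q
  · subst hpq
    rw [if_pos rfl]
    have i0 : ind (¬ p ≤ p) = 0 := ind_false (by simp)
    have hfl : f Tf p p ≤ (Tf.card : ℝ) - 1 := by
      have h1 : 1 ≤ u Tf p p := one_le_u Tf hp p
      have h2 : (1 : ℝ) ≤ (u Tf p p : ℝ) := by exact_mod_cast h1
      rw [f]; linarith
    have e : gg Tf n p p + gg Tf n p p = 2 * (((n : ℝ) / (Tf.card : ℝ)) ^ 2 * (f Tf p p) ^ n) := by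
      rw [gg, i0]; ring
    rw [e]
    have hpow : (f Tf p p) ^ n ≤ ((Tf.card : ℝ) - 1) ^ n :=
      pow_le_pow_left₀ (f_nonneg Tf p p) hfl n
    have hc : (0 : ℝ) ≤ ((n : ℝ) / (Tf.card : ℝ)) ^ 2 := sq_nonneg _
    nlinarith
  · rw [if_neg hpq]
    by_cases h1 : p ≤ q <;> by_cases h2 : q ≤ p
    · exact absurd (le_antisymm h1 h2) hpq
    · -- p ≤ q, ¬ q ≤ p
      have i1 : ind (¬ q ≤ p) = 1 := ind_true h2
      have i2 : ind (¬ p ≤ q) = 0 := ind_false (not_not_intro h1)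
      have e : gg Tf n p q + gg Tf n q p
          = 2 * (((n : ℝ) / (Tf.card : ℝ)) ^ 2 * (f Tf p q) ^ n)
            - 2 * (((n : ℝ) ^ 2 / (Tf.card : ℝ)) * (f Tf p q) ^ (n - 1)) := by
        rw [gg, gg, f_comm Tf q p, i1, i2]; ring
      rw [e]
      exact le_trans (comp_bound hm hF0 hFm hν0 (n := n) (by omega)) hBo
    · -- ¬ p ≤ q, q ≤ p
      have i1 : ind (¬ q ≤ p) = 0 := ind_false (not_not_intro h2)
      have i2 : ind (¬ p ≤ q) = 1 := ind_true h1
      have e : gg Tf n p q + gg Tf n q p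
          = 2 * (((n : ℝ) / (Tf.card : ℝ)) ^ 2 * (f Tf p q) ^ n)
            - 2 * (((n : ℝ) ^ 2 / (Tf.card : ℝ)) * (f Tf p q) ^ (n - 1)) := by
        rw [gg, gg, f_comm Tf q p, i1, i2]; ring
      rw [e]
      exact le_trans (comp_bound hm hF0 hFm hν0 (n := n) (by omega)) hBo
    · -- incomparable
      have i1 : ind (¬ q ≤ p) = 1 := ind_true h2
      have i2 : ind (¬ p ≤ q) = 1 := ind_true h1
      have e : gg Tf n p q + gg Tf n q p
          = 2 * (((n : ℝ) / (Tf.card : ℝ)) ^ 2 * (f Tf p q) ^ n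
            - (2 * ((n : ℝ) ^ 2 / (Tf.card : ℝ))) * (f Tf p q) ^ (n - 1)
            + ((n : ℝ) * ((n : ℝ) - 1)) * (f Tf p q) ^ (n - 2)) := by
        rw [gg, gg, f_comm Tf q p, i1, i2]; ring
      rw [e]
      exact mul_le_mul_of_nonneg_left (incomp_bound hm hF0 hFm hn) (by norm_num)

lemma main_comb (Tf : Finset S) (hTne : Tf.Nonempty) {n : ℕ} (hn : 3 ≤ n) :
    ∑ t ∈ pF Tf n, (((n : ℝ) / (Tf.card : ℝ)) * Wr Tf t - Mr t) ^ 2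
      ≤ (Tf.card : ℝ) ^ n * ((n : ℝ) * (8 / Real.exp 1 + 1 / 2)) := by
  have hm : (1 : ℝ) ≤ (Tf.card : ℝ) := by
    have := Finset.card_pos.2 hTne
    exact_mod_cast this
  have hm0 : (0 : ℝ) < (Tf.card : ℝ) := by linarith
  have hν3 : (3 : ℝ) ≤ (n : ℝ) := by exact_mod_cast hn
  have hmn0 : (0 : ℝ) ≤ (Tf.card : ℝ) ^ n := pow_nonneg (le_of_lt hm0) n
  rw [S2_eq Tf (by omega)]
  -- bound the diagonal-ish A term
  have hA : ∑ a ∈ Tf, (f Tf a a) ^ (n - 1) ≤ (Tf.card : ℝ) ^ n := by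
    have h1 : ∑ a ∈ Tf, (f Tf a a) ^ (n - 1) ≤ ∑ _a ∈ Tf, (Tf.card : ℝ) ^ (n - 1) :=
      Finset.sum_le_sum (fun a _ =>
        pow_le_pow_left₀ (f_nonneg Tf a a) (f_le Tf a a) _)
    have h2 : ∑ _a ∈ Tf, (Tf.card : ℝ) ^ (n - 1) = (Tf.card : ℝ) * (Tf.card : ℝ) ^ (n - 1) := by
      rw [Finset.sum_const, nsmul_eq_mul]
    have h3 : (Tf.card : ℝ) * (Tf.card : ℝ) ^ (n - 1) = (Tf.card : ℝ) ^ n := by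
      rw [← pow_succ']; congr 1; omega
    linarith
  -- symmetrize the double sum
  have hswap : ∑ p ∈ Tf, ∑ q ∈ Tf, gg Tf n p q = ∑ p ∈ Tf, ∑ q ∈ Tf, gg Tf n q p :=
    Finset.sum_comm
  have hhalf : (2 : ℝ) * (∑ p ∈ Tf, ∑ q ∈ Tf, gg Tf n p q)
      = ∑ p ∈ Tf, ∑ q ∈ Tf, (gg Tf n p q + gg Tf n q p) := by
    have h1 : ∑ p ∈ Tf, ∑ q ∈ Tf, (gg Tf n p q + gg Tf n q p)
        = ∑ p ∈ Tf, (∑ q ∈ Tf, gg Tf n p q + ∑ q ∈ Tf, gg Tf n q p) :=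
      Finset.sum_congr rfl (fun p _ => Finset.sum_add_distrib)
    rw [h1, Finset.sum_add_distrib, ← hswap]; ring
  have hpair : ∑ p ∈ Tf, ∑ q ∈ Tf, (gg Tf n p q + gg Tf n q p)
      ≤ (Tf.card : ℝ) * (2 * (((n : ℝ) / (Tf.card : ℝ)) ^ 2 * ((Tf.card : ℝ) - 1) ^ n)
        + (Tf.card : ℝ) * (2 * ((n : ℝ) ^ 2 * (Tf.card : ℝ) ^ (n - 2)
          * (4 / (((n : ℝ) - 2) ^ 2 * Real.exp 1 ^ 2))))) := by
    have hBo : (0 : ℝ) ≤ 2 * ((n : ℝ) ^ 2 * (Tf.card : ℝ) ^ (n - 2)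
        * (4 / (((n : ℝ) - 2) ^ 2 * Real.exp 1 ^ 2))) := by positivity
    have hrow : ∀ p ∈ Tf, ∑ q ∈ Tf, (gg Tf n p q + gg Tf n q p)
        ≤ 2 * (((n : ℝ) / (Tf.card : ℝ)) ^ 2 * ((Tf.card : ℝ) - 1) ^ n)
          + (Tf.card : ℝ) * (2 * ((n : ℝ) ^ 2 * (Tf.card : ℝ) ^ (n - 2)
            * (4 / (((n : ℝ) - 2) ^ 2 * Real.exp 1 ^ 2)))) := by
      intro p hp
      have hstep : ∑ q ∈ Tf, (gg Tf n p q + gg Tf n q p)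
          ≤ ∑ q ∈ Tf, ((if p = q
              then 2 * (((n : ℝ) / (Tf.card : ℝ)) ^ 2 * ((Tf.card : ℝ) - 1) ^ n) else 0)
            + 2 * ((n : ℝ) ^ 2 * (Tf.card : ℝ) ^ (n - 2)
              * (4 / (((n : ℝ) - 2) ^ 2 * Real.exp 1 ^ 2)))) := by
        apply Finset.sum_le_sum
        intro q hq
        have hb := pair_bound Tf hn hp hq
        by_cases h : p = q
        · rw [if_pos h] at hb ⊢
          exact le_trans hb (le_add_of_nonneg_right hBo)
        · rw [if_neg h] at hb ⊢
          exact le_trans hb (le_of_eq (zero_add _).symm)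
      have hsum : ∑ q ∈ Tf, ((if p = q
            then 2 * (((n : ℝ) / (Tf.card : ℝ)) ^ 2 * ((Tf.card : ℝ) - 1) ^ n) else 0)
          + 2 * ((n : ℝ) ^ 2 * (Tf.card : ℝ) ^ (n - 2)
            * (4 / (((n : ℝ) - 2) ^ 2 * Real.exp 1 ^ 2))))
          = 2 * (((n : ℝ) / (Tf.card : ℝ)) ^ 2 * ((Tf.card : ℝ) - 1) ^ n)
            + (Tf.card : ℝ) * (2 * ((n : ℝ) ^ 2 * (Tf.card : ℝ) ^ (n - 2)
              * (4 / (((n : ℝ) - 2) ^ 2 * Real.exp 1 ^ 2)))) := by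
        rw [Finset.sum_add_distrib, Finset.sum_ite_eq Tf p
          (fun _ => 2 * (((n : ℝ) / (Tf.card : ℝ)) ^ 2 * ((Tf.card : ℝ) - 1) ^ n)), if_pos hp,
          Finset.sum_const, nsmul_eq_mul]
      linarith
    calc ∑ p ∈ Tf, ∑ q ∈ Tf, (gg Tf n p q + gg Tf n q p)
        ≤ ∑ _p ∈ Tf, (2 * (((n : ℝ) / (Tf.card : ℝ)) ^ 2 * ((Tf.card : ℝ) - 1) ^ n)
          + (Tf.card : ℝ) * (2 * ((n : ℝ) ^ 2 * (Tf.card : ℝ) ^ (n - 2)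
            * (4 / (((n : ℝ) - 2) ^ 2 * Real.exp 1 ^ 2))))) := Finset.sum_le_sum hrow
      _ = (Tf.card : ℝ) * (2 * (((n : ℝ) / (Tf.card : ℝ)) ^ 2 * ((Tf.card : ℝ) - 1) ^ n)
          + (Tf.card : ℝ) * (2 * ((n : ℝ) ^ 2 * (Tf.card : ℝ) ^ (n - 2)
            * (4 / (((n : ℝ) - 2) ^ 2 * Real.exp 1 ^ 2))))) := by
          rw [Finset.sum_const, nsmul_eq_mul]
  -- diagonal contribution
  have hdiag := diag_total hm n
  -- off-diagonal contribution
  have hoffeq : (Tf.card : ℝ) * ((Tf.card : ℝ) * ((n : ℝ) ^ 2 * (Tf.card : ℝ) ^ (n - 2)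
      * (4 / (((n : ℝ) - 2) ^ 2 * Real.exp 1 ^ 2))))
      = (Tf.card : ℝ) ^ n * ((n : ℝ) ^ 2 * (4 / (((n : ℝ) - 2) ^ 2 * Real.exp 1 ^ 2))) := by
    have hmm : (Tf.card : ℝ) * ((Tf.card : ℝ) * (Tf.card : ℝ) ^ (n - 2)) = (Tf.card : ℝ) ^ n := by
      rw [← pow_succ', ← pow_succ']
      congr 1
      omega
    calc (Tf.card : ℝ) * ((Tf.card : ℝ) * ((n : ℝ) ^ 2 * (Tf.card : ℝ) ^ (n - 2)
        * (4 / (((n : ℝ) - 2) ^ 2 * Real.exp 1 ^ 2))))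
        = ((Tf.card : ℝ) * ((Tf.card : ℝ) * (Tf.card : ℝ) ^ (n - 2)))
          * ((n : ℝ) ^ 2 * (4 / (((n : ℝ) - 2) ^ 2 * Real.exp 1 ^ 2))) := by ring
      _ = (Tf.card : ℝ) ^ n * ((n : ℝ) ^ 2 * (4 / (((n : ℝ) - 2) ^ 2 * Real.exp 1 ^ 2))) := by
          rw [hmm]
  have hoff : (n : ℝ) ^ 2 * (4 / (((n : ℝ) - 2) ^ 2 * Real.exp 1 ^ 2))
      ≤ (n : ℝ) * (12 / Real.exp 1 ^ 2) := by
    have hc2 : (0 : ℝ) < ((n : ℝ) - 2) ^ 2 := by nlinarith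
    have he2 : (0 : ℝ) < Real.exp 1 ^ 2 := by positivity
    have h4 : 4 * (n : ℝ) ≤ 12 * ((n : ℝ) - 2) ^ 2 := by nlinarith
    have e1 : (n : ℝ) ^ 2 * (4 / (((n : ℝ) - 2) ^ 2 * Real.exp 1 ^ 2))
        = (4 * (n : ℝ) ^ 2) / (((n : ℝ) - 2) ^ 2 * Real.exp 1 ^ 2) := by ring
    have e2 : (n : ℝ) * (12 / Real.exp 1 ^ 2) = (12 * (n : ℝ)) / Real.exp 1 ^ 2 := by ring
    rw [e1, e2, div_le_div_iff₀ (by positivity) he2]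
    nlinarith [mul_le_mul_of_nonneg_right h4
      (mul_nonneg (by linarith : (0:ℝ) ≤ (n : ℝ)) (le_of_lt he2))]
  -- numeric inequality
  have henum : (Real.exp 1)⁻¹ + 12 / Real.exp 1 ^ 2 + 1 ≤ 8 / Real.exp 1 + 1 / 2 := by
    have he1 : (2.7182818283 : ℝ) < Real.exp 1 := Real.exp_one_gt_d9
    have he2 : Real.exp 1 < 2.7182818286 := Real.exp_one_lt_d9
    have hepos : (0 : ℝ) < Real.exp 1 := Real.exp_pos 1
    rw [← sub_nonneg]
    have heq : ∀ E : ℝ, 0 < E → 8 / E + 1 / 2 - (E⁻¹ + 12 / E ^ 2 + 1)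
        = (14 * E - 24 - E ^ 2) / (2 * E ^ 2) := by
      intro E hE
      field_simp
      ring
    rw [heq _ hepos]
    apply div_nonneg _ (by positivity)
    nlinarith
  -- put everything together
  have hApart : (n : ℝ) * ∑ a ∈ Tf, (f Tf a a) ^ (n - 1) ≤ (Tf.card : ℝ) ^ n * (n : ℝ) := by
    calc (n : ℝ) * ∑ a ∈ Tf, (f Tf a a) ^ (n - 1) ≤ (n : ℝ) * ((Tf.card : ℝ) ^ n) :=
          mul_le_mul_of_nonneg_left hA (by linarith)
      _ = (Tf.card : ℝ) ^ n * (n : ℝ) := by ring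
  have hgg : ∑ p ∈ Tf, ∑ q ∈ Tf, gg Tf n p q
      ≤ (Tf.card : ℝ) ^ n * ((n : ℝ) * (Real.exp 1)⁻¹)
        + (Tf.card : ℝ) ^ n * ((n : ℝ) * (12 / Real.exp 1 ^ 2)) := by
    have h1 : (Tf.card : ℝ) ^ n * ((n : ℝ) ^ 2 * (4 / (((n : ℝ) - 2) ^ 2 * Real.exp 1 ^ 2)))
        ≤ (Tf.card : ℝ) ^ n * ((n : ℝ) * (12 / Real.exp 1 ^ 2)) :=
      mul_le_mul_of_nonneg_left hoff hmn0
    linarith [hhalf, hpair, hdiag, hoffeq]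
  have hfin : (Tf.card : ℝ) ^ n * ((n : ℝ) * (Real.exp 1)⁻¹)
      + (Tf.card : ℝ) ^ n * ((n : ℝ) * (12 / Real.exp 1 ^ 2))
      + (Tf.card : ℝ) ^ n * (n : ℝ)
      ≤ (Tf.card : ℝ) ^ n * ((n : ℝ) * (8 / Real.exp 1 + 1 / 2)) := by
    have h2 : (0 : ℝ) ≤ (Tf.card : ℝ) ^ n * (n : ℝ) :=
      mul_nonneg hmn0 (by linarith)
    linarith [mul_le_mul_of_nonneg_left henum h2]
  linarith

end Final


section Bridge

lemma sum_ind_card_compl {α : Type*} (s : Finset α) (p : α → Prop) :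
    ∑ x ∈ s, ind (¬ p x) = (s.card : ℝ) - ((s.filter p).card : ℝ) := by
  apply sum_ind_mem s _ (Finset.filter_subset p s)
  intro x hx
  simp only [Finset.mem_filter, hx, true_and]

lemma ncard_filter {α : Type*} [Fintype α] (p : α → Prop) :
    Set.ncard {x | p x} = ((Finset.univ.filter p).card) := by
  have h : {x | p x} = ↑(Finset.univ.filter p) := by
    ext x; simp
  rw [h, Set.ncard_coe_finset]

lemma Mr_eq {S : Type*} [PartialOrder S] {n : ℕ} (t : Fin n → S) :
    Mr t = (n : ℝ)
      - (((Finset.univ : Finset (Fin n)).filter (fun i => ∃ j, j ≠ i ∧ t j ≤ t i)).card : ℝ) := by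
  have h1 : ∀ i ∈ (Finset.univ : Finset (Fin n)),
      c i t = ind (¬ ∃ j, j ≠ i ∧ t j ≤ t i) := by
    intro i _
    rw [c, prod_ind]
    refine ind_congr ?_
    constructor
    · rintro h ⟨j, hj, hle⟩
      rcases h j (Finset.mem_univ j) with h' | h'
      · exact hj h'
      · exact h' hle
    · intro h j _
      by_cases hji : j = i
      · exact Or.inl hji
      · exact Or.inr (fun hle => h ⟨j, hji, hle⟩)
  rw [Mr, Finset.sum_congr rfl h1, sum_ind_card_compl, Finset.card_univ, Fintype.card_fin]
  congr 3
  congr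

lemma Wr_eq {S : Type*} [PartialOrder S] {n : ℕ} (Tf : Finset S) (t : Fin n → S) :
    Wr Tf t = (Tf.card : ℝ) - ((Tf.filter (fun y => ∃ i, t i ≤ y)).card : ℝ) := by
  have h1 : ∀ y ∈ Tf, w y t = ind (¬ ∃ i, t i ≤ y) := by
    intro y _
    rw [w, prod_ind]
    refine ind_congr ?_
    constructor
    · rintro h ⟨i, hi⟩
      exact h i (Finset.mem_univ i) hi
    · intro h i _ hi
      exact h ⟨i, hi⟩
  rw [Wr, Finset.sum_congr rfl h1, sum_ind_card_compl]
  congr 3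
  congr

end Bridge

end UpsetAux
end UpsetAuxDev

open scoped ENNReal
open UpsetAux

/-- **Size of an up-set, Corollary 2.7.** Let `T` be a finite up-set of a poset `S` and
`X₁,…,Xₙ` (`n ≥ 3`) i.i.d. uniform points of `T`. With
`Nₙ = #{i : Xⱼ ⪯ Xᵢ for some j ≠ i}` and the estimator `|T|̂ = n·|↑{X₁,…,Xₙ}|/Nₙ`,
one has `E[(Nₙ²/n)(1 − |T|̂/|T|)²] ≤ 8/e + 1/2`. -/
theorem upper_set_size_estimator
    {S : Type*} [PartialOrder S] [MeasurableSpace S] [MeasurableSingletonClass S]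
    {Ω : Type*} [MeasurableSpace Ω]
    (P : Measure Ω) [IsProbabilityMeasure P]
    (T : Set S) (hTfin : T.Finite) (hTup : IsUpperSet T)
    (n : ℕ) (hn : 3 ≤ n)
    (X : Fin n → Ω → S)
    (hmeas : ∀ i, Measurable (X i))
    (hindep : iIndepFun X P)
    (hlaw : ∀ i, Measure.map (X i) P = uniformOn T)
    (N : Ω → ℕ)
    (hN : ∀ ω, N ω = Set.ncard {i : Fin n | ∃ j, j ≠ i ∧ X j ω ≤ X i ω})
    (sizeEst : Ω → ℝ)
    (hsizeEst : ∀ ω, sizeEst ω =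
      (n : ℝ) * (Set.ncard {y : S | ∃ i, X i ω ≤ y} : ℝ) / (N ω : ℝ)) :
    ∫ ω, ((N ω : ℝ) ^ 2 / n) * (1 - sizeEst ω / (T.ncard : ℝ)) ^ 2 ∂P
      ≤ 8 / Real.exp 1 + 1 / 2 := by
  classical
  have hni : 0 < n := by omega
  let i0 : Fin n := ⟨0, hni⟩
  have hT : T.Nonempty := by
    rcases T.eq_empty_or_nonempty with hTe | hTe
    · exfalso
      have h1 : IsProbabilityMeasure (Measure.map (X i0) P) :=
        Measure.isProbabilityMeasure_map (hmeas i0).aemeasurable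
      rw [hlaw i0, hTe, uniformOn_empty_meas] at h1
      have h2 := h1.measure_univ
      simp only [Measure.coe_zero, Pi.zero_apply] at h2
      exact zero_ne_one h2
    · exact hTe
  have hMeasT : MeasurableSet T := hTfin.measurableSet
  have hTfne : hTfin.toFinset.Nonempty := hTfin.toFinset_nonempty.2 hT
  have hm1 : 1 ≤ hTfin.toFinset.card := Finset.card_pos.2 hTfne
  have hm0 : (0 : ℝ) < (hTfin.toFinset.card : ℝ) := by exact_mod_cast hm1
  have hν0 : (0 : ℝ) < (n : ℝ) := by exact_mod_cast hni
  have hmT : (T.ncard : ℝ) = (hTfin.toFinset.card : ℝ) := by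
    rw [Set.ncard_eq_toFinset_card T hTfin]
  have hXT : ∀ i, P (X i ⁻¹' T) = 1 := by
    intro i
    rw [← Measure.map_apply (hmeas i) hMeasT, hlaw i]
    exact uniformOn_self hTfin hT
  have hae : ∀ᵐ ω ∂P, ∀ i, X i ω ∈ T := by
    rw [MeasureTheory.ae_all_iff]
    intro i
    have hc : P ((X i ⁻¹' T)ᶜ) = 0 := by
      rw [measure_compl ((hmeas i) hMeasT) (measure_ne_top P _), hXT i, measure_univ]
      simp
    have hseteq : {ω | ¬ X i ω ∈ T} = (X i ⁻¹' T)ᶜ := by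
      ext ω; simp [Set.mem_compl_iff]
    rw [MeasureTheory.ae_iff, hseteq]
    exact hc
  have hsing : ∀ a ∈ hTfin.toFinset, uniformOn T {a} = (hTfin.toFinset.card : ℝ≥0∞)⁻¹ := by
    intro a ha
    rw [uniformOn, cond_apply hMeasT, Measure.count_apply_finite T hTfin]
    have h2 : T ∩ {a} = {a} :=
      Set.inter_eq_self_of_subset_right (Set.singleton_subset_iff.2 (hTfin.mem_toFinset.1 ha))
    rw [h2, Measure.count_singleton, mul_one]
  have hEmeas : ∀ t : Fin n → S, MeasurableSet (⋂ i, X i ⁻¹' {t i}) := fun t =>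
    MeasurableSet.iInter (fun i => hmeas i (measurableSet_singleton _))
  have hPE : ∀ t ∈ pF hTfin.toFinset n,
      P (⋂ i, X i ⁻¹' {t i}) = (hTfin.toFinset.card : ℝ≥0∞)⁻¹ ^ n := by
    intro t ht
    have h1 : (⋂ i, X i ⁻¹' {t i}) = ⋂ i ∈ (Finset.univ : Finset (Fin n)), X i ⁻¹' {t i} := by
      simp
    rw [h1, hindep.measure_inter_preimage_eq_mul Finset.univ
      (fun i _ => measurableSet_singleton (t i))]
    have h2 : ∀ i ∈ (Finset.univ : Finset (Fin n)),
        P (X i ⁻¹' {t i}) = (hTfin.toFinset.card : ℝ≥0∞)⁻¹ := by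
      intro i _
      rw [← Measure.map_apply (hmeas i) (measurableSet_singleton _), hlaw i]
      exact hsing (t i) (Fintype.mem_piFinset.1 ht i)
    rw [Finset.prod_congr rfl h2, Finset.prod_const, Finset.card_univ, Fintype.card_fin]
  set F : (Fin n → S) → ℝ := fun t =>
    ((Set.ncard {i : Fin n | ∃ j, j ≠ i ∧ t j ≤ t i} : ℝ) ^ 2 / n)
      * (1 - (n : ℝ) * (Set.ncard {y : S | ∃ i, t i ≤ y} : ℝ)
          / (Set.ncard {i : Fin n | ∃ j, j ≠ i ∧ t j ≤ t i} : ℝ) / (T.ncard : ℝ)) ^ 2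
    with hFdef
  have haeq : (fun ω => ((N ω : ℝ) ^ 2 / n) * (1 - sizeEst ω / (T.ncard : ℝ)) ^ 2)
      =ᵐ[P] fun ω => ∑ t ∈ pF hTfin.toFinset n,
        (⋂ i, X i ⁻¹' {t i}).indicator (fun _ => F t) ω := by
    filter_upwards [hae] with ω hω
    have ht₀ : (fun i => X i ω) ∈ pF hTfin.toFinset n :=
      Fintype.mem_piFinset.2 (fun i => hTfin.mem_toFinset.2 (hω i))
    have hzero : ∀ t ∈ pF hTfin.toFinset n, t ≠ (fun i => X i ω) →
        (⋂ i, X i ⁻¹' {t i}).indicator (fun _ => F t) ω = 0 := by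
      intro t _ hne
      apply Set.indicator_of_notMem
      intro hmem
      apply hne
      funext i
      exact (Set.mem_singleton_iff.1 (Set.mem_iInter.1 hmem i)).symm
    have hsum : ∑ t ∈ pF hTfin.toFinset n,
        (⋂ i, X i ⁻¹' {t i}).indicator (fun _ => F t) ω = F (fun i => X i ω) := by
      rw [Finset.sum_eq_single_of_mem _ ht₀ hzero]
      apply Set.indicator_of_mem
      exact Set.mem_iInter.2 (fun i => rfl)
    rw [hsum, hsizeEst ω, hN ω]
  have hint : ∫ ω, ((N ω : ℝ) ^ 2 / n) * (1 - sizeEst ω / (T.ncard : ℝ)) ^ 2 ∂P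
      = ∑ t ∈ pF hTfin.toFinset n, (P (⋂ i, X i ⁻¹' {t i})).toReal • F t := by
    rw [integral_congr_ae haeq,
      integral_finset_sum _ (fun t _ => (integrable_const (F t)).indicator (hEmeas t))]
    exact Finset.sum_congr rfl fun t _ => integral_indicator_const (F t) (hEmeas t)
  have perT : ∀ t ∈ pF hTfin.toFinset n,
      F t ≤ (1 / (n : ℝ)) * (((n : ℝ) / (hTfin.toFinset.card : ℝ)) * Wr hTfin.toFinset t
        - Mr t) ^ 2 := by
    intro t ht
    have hNn : (Set.ncard {i : Fin n | ∃ j, j ≠ i ∧ t j ≤ t i} : ℝ) = (n : ℝ) - Mr t := by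
      rw [Mr_eq t, ncard_filter]
      ring_nf
      congr
    have hUnset : {y : S | ∃ i, t i ≤ y}
        = ↑(hTfin.toFinset.filter (fun y => ∃ i, t i ≤ y)) := by
      ext y
      simp only [Set.mem_setOf_eq, Finset.coe_filter, Set.mem_setOf_eq, Finset.mem_coe,
        Finset.mem_filter, hTfin.mem_toFinset]
      constructor
      · rintro ⟨i, hi⟩
        exact ⟨hTup hi (hTfin.mem_toFinset.1 (Fintype.mem_piFinset.1 ht i)), ⟨i, hi⟩⟩
      · rintro ⟨-, h⟩
        exact h
    have hUn : (Set.ncard {y : S | ∃ i, t i ≤ y} : ℝ)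
        = (hTfin.toFinset.card : ℝ) - Wr hTfin.toFinset t := by
      rw [hUnset, Set.ncard_coe_finset, Wr_eq]
      ring_nf
    rw [hFdef]
    simp only []
    set NN : ℝ := (Set.ncard {i : Fin n | ∃ j, j ≠ i ∧ t j ≤ t i} : ℝ) with hNNdef
    set UU : ℝ := (Set.ncard {y : S | ∃ i, t i ≤ y} : ℝ) with hUUdef
    have hZ : ((n : ℝ) / (hTfin.toFinset.card : ℝ)) * Wr hTfin.toFinset t - Mr t
        = NN - (n : ℝ) * UU / (hTfin.toFinset.card : ℝ) := by
      have e1 : Wr hTfin.toFinset t = (hTfin.toFinset.card : ℝ) - UU := by linarith [hUn]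
      have e2 : Mr t = (n : ℝ) - NN := by linarith [hNn]
      rw [e1, e2]
      rw [mul_sub, div_mul_cancel₀ _ (ne_of_gt hm0)]
      ring
    rw [hZ, hmT]
    by_cases hNN0 : NN = 0
    · rw [hNN0]
      have hz : ((0 : ℝ) ^ 2 / (n : ℝ))
          * (1 - (n : ℝ) * UU / 0 / (hTfin.toFinset.card : ℝ)) ^ 2 = 0 := by
        norm_num
      rw [hz]
      positivity
    · have he : (NN ^ 2 / (n : ℝ))
          * (1 - (n : ℝ) * UU / NN / (hTfin.toFinset.card : ℝ)) ^ 2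
          = (1 / (n : ℝ)) * (NN - (n : ℝ) * UU / (hTfin.toFinset.card : ℝ)) ^ 2 := by
        field_simp
      rw [he]
  rw [hint]
  have hchain : ∑ t ∈ pF hTfin.toFinset n, (P (⋂ i, X i ⁻¹' {t i})).toReal • F t
      ≤ ∑ t ∈ pF hTfin.toFinset n, ((hTfin.toFinset.card : ℝ)⁻¹) ^ n
        * ((1 / (n : ℝ)) * (((n : ℝ) / (hTfin.toFinset.card : ℝ)) * Wr hTfin.toFinset t
          - Mr t) ^ 2) := by
    apply Finset.sum_le_sum
    intro t ht
    rw [hPE t ht, smul_eq_mul, ENNReal.toReal_pow, ENNReal.toReal_inv, ENNReal.toReal_natCast]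
    exact mul_le_mul_of_nonneg_left (perT t ht) (by positivity)
  have hmain := main_comb hTfin.toFinset hTfne hn
  have hfact : ∑ t ∈ pF hTfin.toFinset n, ((hTfin.toFinset.card : ℝ)⁻¹) ^ n
        * ((1 / (n : ℝ)) * (((n : ℝ) / (hTfin.toFinset.card : ℝ)) * Wr hTfin.toFinset t
          - Mr t) ^ 2)
      = ((hTfin.toFinset.card : ℝ)⁻¹) ^ n * (1 / (n : ℝ))
        * ∑ t ∈ pF hTfin.toFinset n, (((n : ℝ) / (hTfin.toFinset.card : ℝ))
          * Wr hTfin.toFinset t - Mr t) ^ 2 := by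
    rw [Finset.mul_sum]
    refine Finset.sum_congr rfl (fun t _ => ?_)
    ring
  have hlast : ((hTfin.toFinset.card : ℝ)⁻¹) ^ n * (1 / (n : ℝ))
      * ∑ t ∈ pF hTfin.toFinset n, (((n : ℝ) / (hTfin.toFinset.card : ℝ))
        * Wr hTfin.toFinset t - Mr t) ^ 2
      ≤ ((hTfin.toFinset.card : ℝ)⁻¹) ^ n * (1 / (n : ℝ))
        * ((hTfin.toFinset.card : ℝ) ^ n * ((n : ℝ) * (8 / Real.exp 1 + 1 / 2))) :=
    mul_le_mul_of_nonneg_left hmain (by positivity)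
  have hcancel : ((hTfin.toFinset.card : ℝ)⁻¹) ^ n * (1 / (n : ℝ))
      * ((hTfin.toFinset.card : ℝ) ^ n * ((n : ℝ) * (8 / Real.exp 1 + 1 / 2)))
      = 8 / Real.exp 1 + 1 / 2 := by
    have h1 : ((hTfin.toFinset.card : ℝ)⁻¹) ^ n * ((hTfin.toFinset.card : ℝ)) ^ n = 1 := by
      rw [← mul_pow, inv_mul_cancel₀ (ne_of_gt hm0), one_pow]
    have h2 : (1 / (n : ℝ)) * (n : ℝ) = 1 := by
      rw [one_div, inv_mul_cancel₀ (ne_of_gt hν0)]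
    calc ((hTfin.toFinset.card : ℝ)⁻¹) ^ n * (1 / (n : ℝ))
        * ((hTfin.toFinset.card : ℝ) ^ n * ((n : ℝ) * (8 / Real.exp 1 + 1 / 2)))
        = (((hTfin.toFinset.card : ℝ)⁻¹) ^ n * ((hTfin.toFinset.card : ℝ)) ^ n)
          * ((1 / (n : ℝ)) * (n : ℝ)) * (8 / Real.exp 1 + 1 / 2) := by ring
      _ = 8 / Real.exp 1 + 1 / 2 := by rw [h1, h2]; ring
  calc ∑ t ∈ pF hTfin.toFinset n, (P (⋂ i, X i ⁻¹' {t i})).toReal • F t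
      ≤ _ := hchain
    _ = _ := hfact
    _ ≤ _ := hlast
    _ = _ := hcancel

end
end

section
/- Let (X₁, Y₁) be a random pair in ℝ^p × ℝ such that Y₁ and the components of X₁ have sub-Gaussian tails and (X₁,Y₁) has a bounded probability density with respect to Lebesgue measure on ℝ^p × ℝ. Then there exist finite positive constants C₁, C₂ depending only on p and the law of (X₁,Y₁) such that: for every α > 1 and every unit vector z ∈ ℝ^p, E(e^{−α (X₁ᵀz)²}) ≤ C₁ e^{−C₂ log α}; and for every α > 1 and every b ∈ ℝ^p, E(e^{−α (Y₁ − X₁ᵀb)²}) ≤ C₁ e^{−C₂ log α}. -/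
open MeasureTheory ProbabilityTheory
open Real Set

set_option maxHeartbeats 1000000

noncomputable section

/-- A real random variable `Z` has a sub-Gaussian tail if `E(e^{cZ²}) < ∞` for some `c > 0`. -/
def HasSubGaussianTail {Ω : Type*} [MeasurableSpace Ω] (P : Measure Ω) (Z : Ω → ℝ) : Prop :=
  ∃ c > 0, ∫⁻ ω, ENNReal.ofReal (Real.exp (c * Z ω ^ 2)) ∂P < ⊤

lemma SB_exp_neg_le_inv {u : ℝ} (hu : 0 < u) : Real.exp (-u) ≤ u⁻¹ := by
  rw [Real.exp_neg]
  exact inv_anti₀ hu (by linarith [Real.add_one_le_exp u])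

lemma SB_chernoff {Ω : Type*} [MeasurableSpace Ω] (P : Measure Ω) (Z : Ω → ℝ)
    (hZ : Measurable Z) {c R : ℝ} (hc : 0 ≤ c) (hR : 0 ≤ R) :
    P {ω | R < |Z ω|} ≤ ENNReal.ofReal (Real.exp (-(c * R ^ 2))) *
      ∫⁻ ω, ENNReal.ofReal (Real.exp (c * Z ω ^ 2)) ∂P := by
  have hA : MeasurableSet {ω | R < |Z ω|} := measurableSet_lt measurable_const hZ.abs
  rw [← lintegral_indicator_one hA]
  have hpt : ∀ ω, {ω | R < |Z ω|}.indicator (1 : Ω → ENNReal) ω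
      ≤ ENNReal.ofReal (Real.exp (-(c * R ^ 2))) * ENNReal.ofReal (Real.exp (c * Z ω ^ 2)) := by
    intro ω
    by_cases h : R < |Z ω|
    · have hmem : ω ∈ {ω | R < |Z ω|} := h
      rw [Set.indicator_of_mem hmem, ← ENNReal.ofReal_mul (Real.exp_nonneg _), ← Real.exp_add]
      rw [show (1 : Ω → ENNReal) ω = ENNReal.ofReal 1 by simp]
      refine ENNReal.ofReal_le_ofReal (Real.one_le_exp ?_)
      have h2 : R ^ 2 ≤ Z ω ^ 2 := by
        rw [← sq_abs (Z ω)]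
        exact pow_le_pow_left₀ hR h.le 2
      nlinarith
    · have hmem : ω ∉ {ω | R < |Z ω|} := h
      rw [Set.indicator_of_notMem hmem]
      exact zero_le
  refine le_trans (lintegral_mono hpt) ?_
  exact le_of_eq (lintegral_const_mul' _ _ ENNReal.ofReal_ne_top)

lemma SB_box_vol (m : ℕ) (R : ℝ) :
    volume (Set.pi Set.univ fun _ : Fin m => Icc (-R) R) = ENNReal.ofReal (2 * R) ^ m := by
  rw [volume_pi_pi]
  simp [Real.volume_Icc]
  congr 1
  ring_nf
  rw [ENNReal.ofReal_mul' (by norm_num), ENNReal.ofReal_ofNat]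

lemma SB_vol_abs_affine (a c t : ℝ) (ha : a ≠ 0) :
    volume {s : ℝ | |s * a + c| ≤ t} ≤ ENNReal.ofReal (2 * t / |a|) := by
  rcases lt_or_gt_of_ne ha with h | h
  · have hsub : {s : ℝ | |s * a + c| ≤ t} ⊆ Icc ((t - c) / a) ((-t - c) / a) := by
      intro s hs
      rw [mem_setOf_eq, abs_le] at hs
      constructor
      · rw [div_le_iff_of_neg h]; linarith [hs.2]
      · rw [le_div_iff_of_neg h]; linarith [hs.1]
    refine le_trans (measure_mono hsub) ?_
    rw [Real.volume_Icc]
    apply ENNReal.ofReal_le_ofReal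
    rw [abs_of_neg h]
    rw [div_sub_div_same]
    rw [show -t - c - (t - c) = -(2 * t) by ring, neg_div, ← div_neg]
  · have hsub : {s : ℝ | |s * a + c| ≤ t} ⊆ Icc ((-t - c) / a) ((t - c) / a) := by
      intro s hs
      rw [mem_setOf_eq, abs_le] at hs
      constructor
      · rw [div_le_iff₀ h]; linarith [hs.1]
      · rw [le_div_iff₀ h]; linarith [hs.2]
    refine le_trans (measure_mono hsub) ?_
    rw [Real.volume_Icc]
    apply ENNReal.ofReal_le_ofReal
    rw [abs_of_pos h]
    rw [div_sub_div_same, show t - c - (-t - c) = 2 * t by ring]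

lemma SB_slab_prod_vol (p : ℕ) (c : (Fin p → ℝ) → ℝ) (hc : Measurable c) (R t : ℝ)
    (hR : 0 ≤ R) :
    volume {q : (Fin p → ℝ) × ℝ | (∀ j, |q.1 j| ≤ R) ∧ |q.2 - c q.1| ≤ t}
      ≤ ENNReal.ofReal (2 * t) * ENNReal.ofReal (2 * R) ^ p := by
  have hE : MeasurableSet {q : (Fin p → ℝ) × ℝ | (∀ j, |q.1 j| ≤ R) ∧ |q.2 - c q.1| ≤ t} := by
    rw [Set.setOf_and]
    refine MeasurableSet.inter ?_
      (measurableSet_le ((measurable_snd.sub (hc.comp measurable_fst)).abs) measurable_const)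
    rw [show {q : (Fin p → ℝ) × ℝ | ∀ j, |q.1 j| ≤ R} = ⋂ j, {q | |q.1 j| ≤ R} by ext q; simp]
    exact MeasurableSet.iInter fun j =>
      measurableSet_le (measurable_fst.eval (a := j)).abs measurable_const
  rw [Measure.volume_eq_prod, Measure.prod_apply hE]
  have hbound : ∀ x : Fin p → ℝ,
      volume (Prod.mk x ⁻¹' {q : (Fin p → ℝ) × ℝ | (∀ j, |q.1 j| ≤ R) ∧ |q.2 - c q.1| ≤ t})
        ≤ (Set.pi Set.univ fun _ : Fin p => Icc (-R) R).indicator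
            (fun _ => ENNReal.ofReal (2 * t)) x := by
    intro x
    by_cases hx : ∀ j, |x j| ≤ R
    · have : Prod.mk x ⁻¹' {q : (Fin p → ℝ) × ℝ | (∀ j, |q.1 j| ≤ R) ∧ |q.2 - c q.1| ≤ t}
          ⊆ Icc (c x - t) (c x + t) := by
        intro y hy
        simp only [mem_preimage, mem_setOf_eq] at hy
        rw [mem_Icc]
        have := abs_le.1 hy.2
        constructor <;> linarith [this.1, this.2]
      refine le_trans (measure_mono this) ?_
      rw [Real.volume_Icc,
        Set.indicator_of_mem (Set.mem_univ_pi.2 fun j => by simpa [mem_Icc] using abs_le.1 (hx j))]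
      exact ENNReal.ofReal_le_ofReal (by ring_nf; linarith)
    · have : Prod.mk x ⁻¹' {q : (Fin p → ℝ) × ℝ | (∀ j, |q.1 j| ≤ R) ∧ |q.2 - c q.1| ≤ t}
          = ∅ := by
        ext y; simp only [mem_preimage, mem_setOf_eq, mem_empty_iff_false, iff_false]
        tauto
      simp [this]
  calc ∫⁻ x, volume (Prod.mk x ⁻¹' {q : (Fin p → ℝ) × ℝ | (∀ j, |q.1 j| ≤ R) ∧ |q.2 - c q.1| ≤ t})
      ≤ ∫⁻ x, (Set.pi Set.univ fun _ : Fin p => Icc (-R) R).indicator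
          (fun _ => ENNReal.ofReal (2 * t)) x := lintegral_mono hbound
    _ = ENNReal.ofReal (2 * t) * ENNReal.ofReal (2 * R) ^ p := by
        rw [lintegral_indicator (MeasurableSet.univ_pi fun _ => measurableSet_Icc),
          setLIntegral_const, SB_box_vol p R]

lemma SB_slab_pi_vol {n : ℕ} (z : Fin (n + 1) → ℝ) (j₀ : Fin (n + 1)) (hz : z j₀ ≠ 0)
    (R t : ℝ) :
    volume {x : Fin (n + 1) → ℝ | (∀ j, |x j| ≤ R) ∧ |∑ j, x j * z j| ≤ t}
      ≤ ENNReal.ofReal (2 * t / |z j₀|) * ENNReal.ofReal (2 * R) ^ n := by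
  set S : Set (ℝ × (Fin n → ℝ)) :=
    {q | (∀ j, |q.2 j| ≤ R) ∧ |q.1 * z j₀ + ∑ j, q.2 j * z (j₀.succAbove j)| ≤ t} with hS
  have hSmeas : MeasurableSet S := by
    rw [hS, Set.setOf_and]
    refine MeasurableSet.inter ?_ ?_
    · rw [show {q : ℝ × (Fin n → ℝ) | ∀ j, |q.2 j| ≤ R} = ⋂ j, {q | |q.2 j| ≤ R} by ext q; simp]
      exact MeasurableSet.iInter fun j =>
        measurableSet_le (measurable_snd.eval (a := j)).abs measurable_const
    · refine measurableSet_le (Measurable.abs ?_) measurable_const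
      exact (measurable_fst.mul_const _).add
        (Finset.measurable_sum Finset.univ fun j _ => measurable_snd.eval.mul_const _)
  have hmp := measurePreserving_piFinSuccAbove (fun _ : Fin (n + 1) => (volume : Measure ℝ)) j₀
  have hsub : {x : Fin (n + 1) → ℝ | (∀ j, |x j| ≤ R) ∧ |∑ j, x j * z j| ≤ t}
      ⊆ (MeasurableEquiv.piFinSuccAbove (fun _ => ℝ) j₀) ⁻¹' S := by
    intro x hx
    simp only [mem_preimage, MeasurableEquiv.piFinSuccAbove_apply, hS, mem_setOf_eq]
    constructor
    · intro j; exact hx.1 _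
    · have hsum := Fin.sum_univ_succAbove (fun i => x i * z i) j₀
      simp only [Fin.insertNthEquiv, Equiv.coe_fn_symm_mk]
      simp only [Fin.removeNth]
      rw [← hsum]
      exact hx.2
  refine le_trans (measure_mono hsub) ?_
  have hvol : (volume : Measure (Fin (n + 1) → ℝ)) = Measure.pi fun _ => volume := by
    rw [volume_pi]
  rw [hvol]
  rw [hmp.measure_preimage hSmeas.nullMeasurableSet]
  rw [Measure.prod_apply_symm hSmeas]
  have hbound : ∀ y : Fin n → ℝ,
      volume ((fun s => (s, y)) ⁻¹' S)
        ≤ (Set.pi Set.univ fun _ : Fin n => Icc (-R) R).indicator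
            (fun _ => ENNReal.ofReal (2 * t / |z j₀|)) y := by
    intro y
    by_cases hy : ∀ j, |y j| ≤ R
    · have : (fun s => (s, y)) ⁻¹' S
          ⊆ {s : ℝ | |s * z j₀ + ∑ j, y j * z (j₀.succAbove j)| ≤ t} := by
        intro s hs
        exact hs.2
      refine le_trans (measure_mono this) ?_
      rw [Set.indicator_of_mem
        (Set.mem_univ_pi.2 fun j => by simpa [mem_Icc] using abs_le.1 (hy j))]
      exact SB_vol_abs_affine _ _ _ hz
    · have : (fun s => (s, y)) ⁻¹' S = ∅ := by
        ext s; simp only [mem_preimage, hS, mem_setOf_eq, mem_empty_iff_false, iff_false]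
        tauto
      simp [this]
  calc ∫⁻ y, volume ((fun s => (s, y)) ⁻¹' S) ∂(Measure.pi fun _ : Fin n => volume)
      ≤ ∫⁻ y, (Set.pi Set.univ fun _ : Fin n => Icc (-R) R).indicator
          (fun _ => ENNReal.ofReal (2 * t / |z j₀|)) y ∂(Measure.pi fun _ : Fin n => volume) :=
        lintegral_mono hbound
    _ = ENNReal.ofReal (2 * t / |z j₀|) * ENNReal.ofReal (2 * R) ^ n := by
        rw [lintegral_indicator (MeasurableSet.univ_pi fun _ => measurableSet_Icc),
          setLIntegral_const]
        congr 1
        rw [← SB_box_vol n R, volume_pi]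

lemma SB_slab_prod_vol1 {p : ℕ} (z : Fin p → ℝ) (j₀ : Fin p) (hz : z j₀ ≠ 0) (R t : ℝ) :
    volume {q : (Fin p → ℝ) × ℝ | |∑ j, q.1 j * z j| ≤ t ∧ (∀ j, |q.1 j| ≤ R) ∧ |q.2| ≤ R}
      ≤ ENNReal.ofReal (2 * t / |z j₀|) * ENNReal.ofReal (2 * R) ^ p := by
  rcases p with _ | n
  · exact absurd j₀.2 (by simp)
  have hset : {q : (Fin (n + 1) → ℝ) × ℝ |
        |∑ j, q.1 j * z j| ≤ t ∧ (∀ j, |q.1 j| ≤ R) ∧ |q.2| ≤ R}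
      = {x : Fin (n + 1) → ℝ | (∀ j, |x j| ≤ R) ∧ |∑ j, x j * z j| ≤ t} ×ˢ Icc (-R) R := by
    ext q
    simp only [mem_setOf_eq, mem_prod, mem_Icc, ← abs_le]
    tauto
  rw [hset, Measure.volume_eq_prod, Measure.prod_prod, Real.volume_Icc,
    show R - -R = 2 * R by ring, pow_succ]
  rw [← mul_assoc]
  exact mul_le_mul' (SB_slab_pi_vol z j₀ hz R t) le_rfl

/-- **Lemma B.2.** Let `(X₁,Y₁)` be a random pair in `ℝ^p × ℝ` with sub-Gaussian components
and a bounded joint density with respect to Lebesgue measure. Then there are constants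
`C₁, C₂ > 0`, depending only on `p` and the law of `(X₁,Y₁)`, such that for every `α > 1` and
unit vector `z`, `E(e^{−α(X₁ᵀz)²}) ≤ C₁e^{−C₂ log α}`, and for every `α > 1` and `b ∈ ℝ^p`,
`E(e^{−α(Y₁ − X₁ᵀb)²}) ≤ C₁e^{−C₂ log α}`. -/
theorem small_ball_exponential_moment
    (p : ℕ) {Ω : Type*} [MeasurableSpace Ω]
    (P : Measure Ω) [IsProbabilityMeasure P]
    (X1 : Ω → Fin p → ℝ) (Y1 : Ω → ℝ)
    (hXmeas : Measurable X1) (hYmeas : Measurable Y1)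
    (hsubGX : ∀ j : Fin p, HasSubGaussianTail P (fun ω => X1 ω j))
    (hsubGY : HasSubGaussianTail P Y1)
    (hdens : ∃ C : ENNReal, C ≠ ⊤ ∧
      Measure.map (fun ω => (X1 ω, Y1 ω)) P ≤ C • (volume : Measure ((Fin p → ℝ) × ℝ))) :
    ∃ C₁ C₂ : ℝ, 0 < C₁ ∧ 0 < C₂ ∧
      (∀ α : ℝ, 1 < α → ∀ z : Fin p → ℝ, ∑ j, z j ^ 2 = 1 →
        ∫ ω, Real.exp (-α * (∑ j, X1 ω j * z j) ^ 2) ∂P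
          ≤ C₁ * Real.exp (-C₂ * Real.log α)) ∧
      (∀ α : ℝ, 1 < α → ∀ b : Fin p → ℝ,
        ∫ ω, Real.exp (-α * (Y1 ω - ∑ j, X1 ω j * b j) ^ 2) ∂P
          ≤ C₁ * Real.exp (-C₂ * Real.log α)) := by
  choose cX hcXpos hcXfin using hsubGX
  obtain ⟨cY, hcYpos, hcYfin⟩ := hsubGY
  obtain ⟨C, hCtop, hCle⟩ := hdens
  have hφ : Measurable fun ω => (X1 ω, Y1 ω) := hXmeas.prodMk hYmeas
  set c₀ : ℝ := Finset.univ.inf' Finset.univ_nonempty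
    (fun o : Option (Fin p) => o.elim cY cX) with hc₀def
  have hc₀pos : 0 < c₀ := by
    rw [hc₀def, Finset.lt_inf'_iff]
    rintro (_ | j) -
    · exact hcYpos
    · exact hcXpos j
  have hc₀Y : c₀ ≤ cY := Finset.inf'_le _ (Finset.mem_univ none)
  have hc₀X : ∀ j, c₀ ≤ cX j := fun j => Finset.inf'_le _ (Finset.mem_univ (some j))
  set IX : Fin p → ENNReal :=
    fun j => ∫⁻ ω, ENNReal.ofReal (Real.exp (cX j * X1 ω j ^ 2)) ∂P with hIX
  set IY : ENNReal := ∫⁻ ω, ENNReal.ofReal (Real.exp (cY * Y1 ω ^ 2)) ∂P with hIY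
  set Ktot : ENNReal := (∑ j, IX j) + IY with hKtotdef
  have hKtot : Ktot ≠ ⊤ := by
    rw [hKtotdef]
    exact ENNReal.add_ne_top.2
      ⟨(ENNReal.sum_lt_top.2 fun j _ => hcXfin j).ne, hcYfin.ne⟩
  set sl : ℝ := Real.sqrt p + 1 with hsldef
  have hsl : 0 < sl := by
    rw [hsldef]; positivity
  set D : ℝ := C.toReal with hDdef
  have hD : 0 ≤ D := ENNReal.toReal_nonneg
  set C₂ : ℝ := ((8 : ℝ) * (p + 1))⁻¹ with hC₂def
  have hp1 : (0 : ℝ) < (p : ℝ) + 1 := by positivity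
  have hC₂pos : 0 < C₂ := by rw [hC₂def]; positivity
  set K₂ : ℝ := 2 * sl * (2 / Real.sqrt c₀) ^ p with hK₂def
  have hK₂ : 0 < K₂ := by
    rw [hK₂def]
    have := Real.sqrt_pos.2 hc₀pos
    positivity
  set C₁ : ℝ := D * K₂ + Ktot.toReal + 1 with hC₁def
  have hC₁pos : 0 < C₁ := by
    rw [hC₁def]
    have := ENNReal.toReal_nonneg (a := Ktot)
    nlinarith
  have key : ∀ W : Ω → ℝ, Measurable W →
      (∀ t R : ℝ, 0 < t → 0 < R →
        P {ω | |W ω| ≤ t ∧ (∀ j, |X1 ω j| ≤ R) ∧ |Y1 ω| ≤ R}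
          ≤ C * (ENNReal.ofReal (2 * t * sl) * ENNReal.ofReal (2 * R) ^ p)) →
      ∀ α : ℝ, 1 < α →
        ∫ ω, Real.exp (-α * W ω ^ 2) ∂P ≤ C₁ * Real.exp (-C₂ * Real.log α) := by
    intro W hW hball α hα
    have hα0 : (0 : ℝ) < α := lt_trans one_pos hα
    set t : ℝ := α ^ (-(4 : ℝ)⁻¹) with htdef
    set ρ : ℝ := α ^ C₂ with hρdef
    have hsc₀ : 0 < Real.sqrt c₀ := Real.sqrt_pos.2 hc₀pos
    set R : ℝ := ρ / Real.sqrt c₀ with hRdef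
    have ht : 0 < t := Real.rpow_pos_of_pos hα0 _
    have hρ : 0 < ρ := Real.rpow_pos_of_pos hα0 _
    have hR : 0 < R := div_pos hρ hsc₀
    -- numeric facts
    have hρp : ρ ^ p = α ^ (C₂ * p) := by
      rw [hρdef, ← Real.rpow_natCast (α ^ C₂) p, ← Real.rpow_mul hα0.le]
    have hρ2 : ρ ^ 2 = α ^ (C₂ * 2) := by
      rw [hρdef, ← Real.rpow_natCast (α ^ C₂) 2, ← Real.rpow_mul hα0.le]
      norm_num
    have ht2 : α * t ^ 2 = α ^ (2 : ℝ)⁻¹ := by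
      rw [htdef, ← Real.rpow_natCast (α ^ _) 2, ← Real.rpow_mul hα0.le]
      nth_rewrite 1 [← Real.rpow_one α]
      rw [← Real.rpow_add hα0]
      norm_num
    have hC₂p1 : C₂ * ((p : ℝ) + 1) = 8⁻¹ := by
      rw [hC₂def, mul_comm (8:ℝ), mul_inv, mul_comm, ← mul_assoc,
        mul_inv_cancel₀ hp1.ne', one_mul]
    have e3 : Real.exp (-(α * t ^ 2)) ≤ α ^ (-C₂) := by
      calc Real.exp (-(α * t ^ 2)) ≤ (α ^ (2 : ℝ)⁻¹)⁻¹ := by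
            rw [ht2]; exact SB_exp_neg_le_inv (Real.rpow_pos_of_pos hα0 _)
        _ = α ^ (-(2 : ℝ)⁻¹) := (Real.rpow_neg hα0.le _).symm
        _ ≤ α ^ (-C₂) := by
            refine Real.rpow_le_rpow_of_exponent_le hα.le ?_
            have h8 : (2 : ℝ) ≤ 8 * ((p : ℝ) + 1) := by nlinarith
            have : C₂ ≤ 2⁻¹ := by
              rw [hC₂def]
              exact inv_anti₀ two_pos h8
            linarith
    have hc₀R : c₀ * R ^ 2 = ρ ^ 2 := by
      rw [hRdef, div_pow, Real.sq_sqrt hc₀pos.le, mul_comm, div_mul_cancel₀ _ hc₀pos.ne']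
    have e2 : Real.exp (-(c₀ * R ^ 2)) ≤ α ^ (-C₂) := by
      calc Real.exp (-(c₀ * R ^ 2)) = Real.exp (-(ρ ^ 2)) := by rw [hc₀R]
        _ ≤ (ρ ^ 2)⁻¹ := SB_exp_neg_le_inv (by positivity)
        _ = α ^ (-(C₂ * 2)) := by rw [hρ2, ← Real.rpow_neg hα0.le]
        _ ≤ α ^ (-C₂) := Real.rpow_le_rpow_of_exponent_le hα.le (by linarith)
    have e1 : 2 * t * sl * (2 * R) ^ p ≤ K₂ * α ^ (-C₂) := by
      have h2R : 2 * R = (2 / Real.sqrt c₀) * ρ := by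
        rw [hRdef]; field_simp
      have htρ : t * ρ ^ p = α ^ (-(4 : ℝ)⁻¹ + C₂ * p) := by
        rw [htdef, hρp, ← Real.rpow_add hα0]
      have hrw : 2 * t * sl * (2 * R) ^ p = K₂ * (t * ρ ^ p) := by
        rw [h2R, mul_pow, hK₂def]; ring
      rw [hrw, htρ]
      refine mul_le_mul_of_nonneg_left ?_ hK₂.le
      refine Real.rpow_le_rpow_of_exponent_le hα.le ?_
      have : C₂ * ((p : ℝ) + 1) = 8⁻¹ := hC₂p1
      nlinarith
    -- measurability, reduce to lintegral
    have hfm : Measurable fun ω => Real.exp (-α * W ω ^ 2) :=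
      Real.measurable_exp.comp ((hW.pow_const 2).const_mul (-α))
    rw [MeasureTheory.integral_eq_lintegral_of_nonneg_ae
      (Filter.Eventually.of_forall fun ω => (Real.exp_pos _).le) hfm.aestronglyMeasurable]
    rw [show Real.exp (-C₂ * Real.log α) = α ^ (-C₂) by
      rw [Real.rpow_def_of_pos hα0, mul_comm]]
    refine ENNReal.toReal_le_of_le_ofReal (by positivity) ?_
    -- step 1
    have hAm : MeasurableSet {ω | |W ω| ≤ t} := measurableSet_le hW.abs measurable_const
    have step1 : ∫⁻ ω, ENNReal.ofReal (Real.exp (-α * W ω ^ 2)) ∂P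
        ≤ P {ω | |W ω| ≤ t} + ENNReal.ofReal (Real.exp (-(α * t ^ 2))) := by
      have hpt : ∀ ω, ENNReal.ofReal (Real.exp (-α * W ω ^ 2))
          ≤ {ω | |W ω| ≤ t}.indicator (1 : Ω → ENNReal) ω
            + ENNReal.ofReal (Real.exp (-(α * t ^ 2))) := by
        intro ω
        by_cases h : |W ω| ≤ t
        · have hmem : ω ∈ {ω | |W ω| ≤ t} := h
          rw [Set.indicator_of_mem hmem]
          refine le_add_right ?_
          refine ENNReal.ofReal_le_one.2 (Real.exp_le_one_iff.2 ?_)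
          nlinarith [sq_nonneg (W ω)]
        · have hmem : ω ∉ {ω | |W ω| ≤ t} := h
          rw [Set.indicator_of_notMem hmem, zero_add]
          refine ENNReal.ofReal_le_ofReal (Real.exp_le_exp.2 ?_)
          have h1 : t < |W ω| := not_le.1 h
          have h2 : t ^ 2 ≤ W ω ^ 2 := by
            rw [← sq_abs (W ω)]
            nlinarith
          nlinarith [mul_le_mul_of_nonneg_left h2 hα0.le]
      calc ∫⁻ ω, ENNReal.ofReal (Real.exp (-α * W ω ^ 2)) ∂P
          ≤ ∫⁻ ω, ({ω | |W ω| ≤ t}.indicator (1 : Ω → ENNReal) ω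
              + ENNReal.ofReal (Real.exp (-(α * t ^ 2)))) ∂P := lintegral_mono hpt
        _ = P {ω | |W ω| ≤ t} + ENNReal.ofReal (Real.exp (-(α * t ^ 2))) := by
            rw [lintegral_add_left (measurable_one.indicator hAm),
              lintegral_indicator_one hAm, lintegral_const, measure_univ, mul_one]
    -- step 2
    set Good : Set Ω := {ω | |W ω| ≤ t ∧ (∀ j, |X1 ω j| ≤ R) ∧ |Y1 ω| ≤ R} with hGood
    have step2 : P {ω | |W ω| ≤ t}
        ≤ P Good + ((∑ j, P {ω | R < |X1 ω j|}) + P {ω | R < |Y1 ω|}) := by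
      have hsub : {ω | |W ω| ≤ t}
          ⊆ Good ∪ ((⋃ j, {ω | R < |X1 ω j|}) ∪ {ω | R < |Y1 ω|}) := by
        intro ω hω
        by_cases h1 : ∀ j, |X1 ω j| ≤ R
        · by_cases h2 : |Y1 ω| ≤ R
          · exact Or.inl ⟨hω, h1, h2⟩
          · exact Or.inr (Or.inr (not_le.1 h2))
        · push_neg at h1
          obtain ⟨j, hj⟩ := h1
          exact Or.inr (Or.inl (Set.mem_iUnion.2 ⟨j, hj⟩))
      refine le_trans (measure_mono hsub) ?_
      refine le_trans (measure_union_le _ _) ?_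
      refine add_le_add_right ?_ _
      refine le_trans (measure_union_le _ _) ?_
      refine add_le_add_left ?_ _
      refine le_trans (measure_iUnion_le _) ?_
      rw [tsum_fintype]
    -- step 3: tails
    have tailX : ∀ j, P {ω | R < |X1 ω j|}
        ≤ ENNReal.ofReal (Real.exp (-(c₀ * R ^ 2))) * IX j := by
      intro j
      refine le_trans (SB_chernoff P (fun ω => X1 ω j) (hXmeas.eval) (hcXpos j).le hR.le) ?_
      refine mul_le_mul' (ENNReal.ofReal_le_ofReal (Real.exp_le_exp.2 ?_)) le_rfl
      have : c₀ * R ^ 2 ≤ cX j * R ^ 2 :=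
        mul_le_mul_of_nonneg_right (hc₀X j) (sq_nonneg R)
      linarith
    have tailY : P {ω | R < |Y1 ω|}
        ≤ ENNReal.ofReal (Real.exp (-(c₀ * R ^ 2))) * IY := by
      refine le_trans (SB_chernoff P Y1 hYmeas hcYpos.le hR.le) ?_
      refine mul_le_mul' (ENNReal.ofReal_le_ofReal (Real.exp_le_exp.2 ?_)) le_rfl
      have : c₀ * R ^ 2 ≤ cY * R ^ 2 :=
        mul_le_mul_of_nonneg_right hc₀Y (sq_nonneg R)
      linarith
    have step3 : (∑ j, P {ω | R < |X1 ω j|}) + P {ω | R < |Y1 ω|}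
        ≤ ENNReal.ofReal (Real.exp (-(c₀ * R ^ 2))) * Ktot := by
      rw [hKtotdef, mul_add, Finset.mul_sum]
      exact add_le_add (Finset.sum_le_sum fun j _ => tailX j) tailY
    -- step 4: small ball
    have step4 : P Good ≤ C * (ENNReal.ofReal (2 * t * sl) * ENNReal.ofReal (2 * R) ^ p) :=
      hball t R ht hR
    -- final assembly
    have hT1 : C * (ENNReal.ofReal (2 * t * sl) * ENNReal.ofReal (2 * R) ^ p)
        ≤ ENNReal.ofReal (D * K₂ * α ^ (-C₂)) := by
      rw [← ENNReal.ofReal_toReal hCtop, ← hDdef,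
        ← ENNReal.ofReal_pow (by positivity : (0:ℝ) ≤ 2 * R),
        ← ENNReal.ofReal_mul (by positivity : (0:ℝ) ≤ 2 * t * sl),
        ← ENNReal.ofReal_mul hD]
      refine ENNReal.ofReal_le_ofReal ?_
      calc D * (2 * t * sl * (2 * R) ^ p) ≤ D * (K₂ * α ^ (-C₂)) :=
            mul_le_mul_of_nonneg_left e1 hD
        _ = D * K₂ * α ^ (-C₂) := by ring

    have hT2 : ENNReal.ofReal (Real.exp (-(c₀ * R ^ 2))) * Ktot
        ≤ ENNReal.ofReal (Ktot.toReal * α ^ (-C₂)) := by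
      nth_rewrite 1 [← ENNReal.ofReal_toReal hKtot]
      rw [← ENNReal.ofReal_mul (Real.exp_nonneg _)]
      refine ENNReal.ofReal_le_ofReal ?_
      rw [mul_comm (Ktot.toReal)]
      exact mul_le_mul_of_nonneg_right e2 ENNReal.toReal_nonneg
    have hT3 : ENNReal.ofReal (Real.exp (-(α * t ^ 2))) ≤ ENNReal.ofReal (α ^ (-C₂)) :=
      ENNReal.ofReal_le_ofReal e3
    calc ∫⁻ ω, ENNReal.ofReal (Real.exp (-α * W ω ^ 2)) ∂P
        ≤ P {ω | |W ω| ≤ t} + ENNReal.ofReal (Real.exp (-(α * t ^ 2))) := step1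
      _ ≤ (P Good + ((∑ j, P {ω | R < |X1 ω j|}) + P {ω | R < |Y1 ω|}))
            + ENNReal.ofReal (Real.exp (-(α * t ^ 2))) := add_le_add_left step2 _
      _ ≤ (ENNReal.ofReal (D * K₂ * α ^ (-C₂)) + ENNReal.ofReal (Ktot.toReal * α ^ (-C₂)))
            + ENNReal.ofReal (α ^ (-C₂)) :=
          add_le_add (add_le_add (le_trans step4 hT1) (le_trans step3 hT2)) hT3
      _ = ENNReal.ofReal (D * K₂ * α ^ (-C₂) + Ktot.toReal * α ^ (-C₂) + α ^ (-C₂)) := by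
          rw [← ENNReal.ofReal_add (by positivity)
              (by positivity : (0:ℝ) ≤ Ktot.toReal * α ^ (-C₂)),
            ← ENNReal.ofReal_add (by positivity) (by positivity : (0:ℝ) ≤ α ^ (-C₂))]
      _ = ENNReal.ofReal (C₁ * α ^ (-C₂)) := by
          rw [hC₁def]; ring_nf
  refine ⟨C₁, C₂, hC₁pos, hC₂pos, ?_, ?_⟩
  · -- first claim
    intro α hα z hz
    have hne : (Finset.univ : Finset (Fin p)).Nonempty := by
      by_contra h
      rw [Finset.not_nonempty_iff_eq_empty] at h
      rw [h, Finset.sum_empty] at hz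
      norm_num at hz
    have hp0 : 0 < p := by
      have := Finset.card_pos.2 hne
      simpa using this
    have hpR : (0:ℝ) < p := by exact_mod_cast hp0
    obtain ⟨j₀, -, hj₀⟩ := Finset.exists_le_of_sum_le (f := fun _ : Fin p => (p : ℝ)⁻¹)
      (g := fun j => z j ^ 2) hne (by
        rw [Finset.sum_const, Finset.card_univ, Fintype.card_fin, nsmul_eq_mul,
          mul_inv_cancel₀ hpR.ne', hz])
    have hzj₀ : z j₀ ≠ 0 := by
      intro h
      rw [h] at hj₀
      simp only [ne_eq, zero_pow, OfNat.ofNat_ne_zero, not_false_eq_true] at hj₀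
      nlinarith [inv_pos.2 hpR]
    refine key _ (Finset.measurable_sum Finset.univ fun j _ => hXmeas.eval.mul_const _) ?_ α hα
    intro t R ht hR
    set E : Set ((Fin p → ℝ) × ℝ) :=
      {q | |∑ j, q.1 j * z j| ≤ t ∧ (∀ j, |q.1 j| ≤ R) ∧ |q.2| ≤ R} with hE
    have hEm : MeasurableSet E := by
      rw [hE, Set.setOf_and, Set.setOf_and]
      refine MeasurableSet.inter ?_ (MeasurableSet.inter ?_ ?_)
      · exact measurableSet_le (Measurable.abs
          (Finset.measurable_sum Finset.univ fun j _ =>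
            (measurable_fst.eval (a := j)).mul_const _)) measurable_const
      · rw [show {q : (Fin p → ℝ) × ℝ | ∀ j, |q.1 j| ≤ R} = ⋂ j, {q | |q.1 j| ≤ R} by
          ext q; simp]
        exact MeasurableSet.iInter fun j =>
          measurableSet_le (measurable_fst.eval (a := j)).abs measurable_const
      · exact measurableSet_le measurable_snd.abs measurable_const
    have hpre : {ω | |∑ j, X1 ω j * z j| ≤ t ∧ (∀ j, |X1 ω j| ≤ R) ∧ |Y1 ω| ≤ R}
        = (fun ω => (X1 ω, Y1 ω)) ⁻¹' E := rfl
    rw [hpre, ← Measure.map_apply hφ hEm]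
    refine le_trans (Measure.le_iff'.1 hCle E) ?_
    rw [Measure.smul_apply, smul_eq_mul]
    refine mul_le_mul' le_rfl ?_
    refine le_trans (SB_slab_prod_vol1 z j₀ hzj₀ R t) ?_
    refine mul_le_mul' (ENNReal.ofReal_le_ofReal ?_) le_rfl
    -- 2 t / |z j₀| ≤ 2 t sl
    have habs : Real.sqrt ((p:ℝ)⁻¹) ≤ |z j₀| := by
      rw [← Real.sqrt_sq_eq_abs]
      exact Real.sqrt_le_sqrt hj₀
    have hsq : 0 < Real.sqrt ((p:ℝ)⁻¹) := Real.sqrt_pos.2 (inv_pos.2 hpR)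
    calc 2 * t / |z j₀| ≤ 2 * t / Real.sqrt ((p:ℝ)⁻¹) :=
          div_le_div_of_nonneg_left (by positivity) hsq habs
      _ = 2 * t * Real.sqrt p := by
          rw [Real.sqrt_inv, div_eq_mul_inv, inv_inv]
      _ ≤ 2 * t * sl := by
          rw [hsldef]
          nlinarith [Real.sqrt_nonneg (p:ℝ)]
  · -- second claim
    intro α hα b
    refine key (fun ω => Y1 ω - ∑ j, X1 ω j * b j) (hYmeas.sub
      (Finset.measurable_sum Finset.univ fun j _ => hXmeas.eval.mul_const _)) ?_ α hα
    intro t R ht hR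
    set E : Set ((Fin p → ℝ) × ℝ) :=
      {q | |q.2 - ∑ j, q.1 j * b j| ≤ t ∧ (∀ j, |q.1 j| ≤ R) ∧ |q.2| ≤ R} with hE
    have hcm : Measurable fun x : Fin p → ℝ => ∑ j, x j * b j :=
      Finset.measurable_sum Finset.univ fun j _ => (measurable_pi_apply j).mul_const _
    have hEm : MeasurableSet E := by
      rw [hE, Set.setOf_and, Set.setOf_and]
      refine MeasurableSet.inter ?_ (MeasurableSet.inter ?_ ?_)
      · exact measurableSet_le
          ((measurable_snd.sub (hcm.comp measurable_fst)).abs) measurable_const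
      · rw [show {q : (Fin p → ℝ) × ℝ | ∀ j, |q.1 j| ≤ R} = ⋂ j, {q | |q.1 j| ≤ R} by
          ext q; simp]
        exact MeasurableSet.iInter fun j =>
          measurableSet_le (measurable_fst.eval (a := j)).abs measurable_const
      · exact measurableSet_le measurable_snd.abs measurable_const
    have hpre : {ω | |Y1 ω - ∑ j, X1 ω j * b j| ≤ t ∧ (∀ j, |X1 ω j| ≤ R) ∧ |Y1 ω| ≤ R}
        = (fun ω => (X1 ω, Y1 ω)) ⁻¹' E := rfl
    rw [hpre, ← Measure.map_apply hφ hEm]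
    refine le_trans (Measure.le_iff'.1 hCle E) ?_
    rw [Measure.smul_apply, smul_eq_mul]
    refine mul_le_mul' le_rfl ?_
    have hsubE : E ⊆ {q : (Fin p → ℝ) × ℝ | (∀ j, |q.1 j| ≤ R) ∧ |q.2 - ∑ j, q.1 j * b j| ≤ t} := by
      intro q hq
      exact ⟨hq.2.1, hq.1⟩
    refine le_trans (measure_mono hsubE) ?_
    refine le_trans (SB_slab_prod_vol (p := p) _ hcm R t hR.le) ?_
    refine mul_le_mul' (ENNReal.ofReal_le_ofReal ?_) le_rfl
    nlinarith [Real.sqrt_nonneg (p:ℝ)]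


end
end
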